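/- arXiv:1311.6279 — 4 statements merged into one kernel-verified Lean document; each statement's English description precedes it below -/
import Mathlib

section
/- Let V = ℝ^{2N} (N ≥ 1) with its Euclidean inner product, J an orthogonal complex structure on V, and R any algebraic curvature tensor on V. Then ∫_{S^{2N−1}} H(v) dσ(v) = ((3s* + s) / (4N(N+1))) · Vol(S^{2N−1}), where H(v) = R(v, J(v), v, J(v)), s is the scalar curvature of R, and s* is the star-scalar curvature of R with respect to J. -/
open MeasureTheory RealInnerProductSpace

noncomputable section

/-- An algebraic curvature tensor on a real inner product space: a 4-linear map
with the usual antisymmetries, pair symmetry and first Bianchi identity. -/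
structure AlgCurvatureTensor (E : Type*) [NormedAddCommGroup E] [InnerProductSpace ℝ E] where
  R : E → E → E → E → ℝ
  add_fst : ∀ x x' y z w, R (x + x') y z w = R x y z w + R x' y z w
  smul_fst : ∀ (c : ℝ) x y z w, R (c • x) y z w = c * R x y z w
  add_snd : ∀ x y y' z w, R x (y + y') z w = R x y z w + R x y' z w
  smul_snd : ∀ (c : ℝ) x y z w, R x (c • y) z w = c * R x y z w
  add_trd : ∀ x y z z' w, R x y (z + z') w = R x y z w + R x y z' w
  smul_trd : ∀ (c : ℝ) x y z w, R x y (c • z) w = c * R x y z w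
  add_fth : ∀ x y z w w', R x y z (w + w') = R x y z w + R x y z w'
  smul_fth : ∀ (c : ℝ) x y z w, R x y z (c • w) = c * R x y z w
  antisymm₁₂ : ∀ x y z w, R x y z w = - R y x z w
  antisymm₃₄ : ∀ x y z w, R x y z w = - R x y w z
  pair_symm : ∀ x y z w, R x y z w = R z w x y
  bianchi : ∀ x y z w, R x y z w + R y z x w + R z x y w = 0

/-- An orthogonal complex structure on a real inner product space:
`J ∘ J = -id` and `J` preserves the inner product. -/
def IsOrthCplxStructure {E : Type*} [NormedAddCommGroup E] [InnerProductSpace ℝ E]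
    (J : E →ₗ[ℝ] E) : Prop :=
  (∀ x, J (J x) = -x) ∧ ∀ x y, (inner ℝ (J x) (J y) : ℝ) = inner ℝ x y

/-- Kähler symmetry of a curvature tensor with respect to a complex structure `J`:
`R(Jx, Jy, z, w) = R(x, y, z, w)`. -/
def AlgCurvatureTensor.IsKaehler {E : Type*} [NormedAddCommGroup E] [InnerProductSpace ℝ E]
    (T : AlgCurvatureTensor E) (J : E →ₗ[ℝ] E) : Prop :=
  ∀ x y z w, T.R (J x) (J y) z w = T.R x y z w

/-- The `i`-th standard basis vector of Euclidean space `ℝⁿ`. -/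
def stdBasis (n : ℕ) (i : Fin n) : EuclideanSpace ℝ (Fin n) := EuclideanSpace.single i 1

/-- The scalar curvature of an algebraic curvature tensor on `ℝⁿ`:
`s = ∑ i ∑ a R(eᵢ, eₐ, eᵢ, eₐ)`. -/
def scalarCurv {n : ℕ} (T : AlgCurvatureTensor (EuclideanSpace ℝ (Fin n))) : ℝ :=
  ∑ i : Fin n, ∑ a : Fin n, T.R (stdBasis n i) (stdBasis n a) (stdBasis n i) (stdBasis n a)

/-- The star-scalar curvature of an algebraic curvature tensor on `ℝⁿ` with respect to `J`:
`s* = ∑ i ∑ a R(eₐ, J eᵢ, eᵢ, J eₐ)`. -/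
def starScalarCurv {n : ℕ} (T : AlgCurvatureTensor (EuclideanSpace ℝ (Fin n)))
    (J : EuclideanSpace ℝ (Fin n) →ₗ[ℝ] EuclideanSpace ℝ (Fin n)) : ℝ :=
  ∑ i : Fin n, ∑ a : Fin n,
    T.R (stdBasis n a) (J (stdBasis n i)) (stdBasis n i) (J (stdBasis n a))

/-- `R` is Einstein with constant `Λ` if `Ric(x,y) = Λ ⟨x,y⟩`. -/
def AlgCurvatureTensor.IsEinstein {n : ℕ}
    (T : AlgCurvatureTensor (EuclideanSpace ℝ (Fin n))) (Λ : ℝ) : Prop :=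
  ∀ x y, (∑ a : Fin n, T.R x (stdBasis n a) y (stdBasis n a)) = Λ * (inner ℝ x y : ℝ)

/-- The canonical surface measure on the unit sphere of Euclidean space,
obtained from the Lebesgue measure. -/
def sphereMeasure (n : ℕ) : Measure (Metric.sphere (0 : EuclideanSpace ℝ (Fin n)) 1) :=
  (volume : Measure (EuclideanSpace ℝ (Fin n))).toSphere

/-- The Euclidean Laplacian `Δf = ∑ i ∂²f/∂xᵢ²`. -/
def eucLaplacian {n : ℕ} (f : EuclideanSpace ℝ (Fin n) → ℝ) (x : EuclideanSpace ℝ (Fin n)) : ℝ :=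
  ∑ i : Fin n, fderiv ℝ (fun y => fderiv ℝ f y (stdBasis n i)) x (stdBasis n i)

namespace BergerAux
open Finset

variable {n : ℕ} {E' : Type*}

local notation "E" => EuclideanSpace ℝ (Fin n)

variable (T : AlgCurvatureTensor (EuclideanSpace ℝ (Fin n)))
variable {J : EuclideanSpace ℝ (Fin n) →ₗ[ℝ] EuclideanSpace ℝ (Fin n)}

lemma R_zero₁ (y z w : E) : T.R 0 y z w = 0 := by
  simpa using T.smul_fst 0 0 y z w

lemma R_zero₂ (x z w : E) : T.R x 0 z w = 0 := by
  simpa using T.smul_snd 0 x 0 z w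

lemma R_zero₃ (x y w : E) : T.R x y 0 w = 0 := by
  simpa using T.smul_trd 0 x y 0 w

lemma R_zero₄ (x y z : E) : T.R x y z 0 = 0 := by
  simpa using T.smul_fth 0 x y z 0

lemma R_sum₁ {ι : Type*} (s : Finset ι) (f : ι → E) (y z w : E) :
    T.R (∑ i ∈ s, f i) y z w = ∑ i ∈ s, T.R (f i) y z w := by
  induction s using Finset.cons_induction with
  | empty => simp [R_zero₁]
  | cons a s ha ih => simp [Finset.sum_cons, T.add_fst, ih]

lemma R_sum₂ {ι : Type*} (s : Finset ι) (x : E) (f : ι → E) (z w : E) :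
    T.R x (∑ i ∈ s, f i) z w = ∑ i ∈ s, T.R x (f i) z w := by
  induction s using Finset.cons_induction with
  | empty => simp [R_zero₂]
  | cons a s ha ih => simp [Finset.sum_cons, T.add_snd, ih]

lemma R_sum₃ {ι : Type*} (s : Finset ι) (x y : E) (f : ι → E) (w : E) :
    T.R x y (∑ i ∈ s, f i) w = ∑ i ∈ s, T.R x y (f i) w := by
  induction s using Finset.cons_induction with
  | empty => simp [R_zero₃]
  | cons a s ha ih => simp [Finset.sum_cons, T.add_trd, ih]

lemma R_sum₄ {ι : Type*} (s : Finset ι) (x y z : E) (f : ι → E) :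
    T.R x y z (∑ i ∈ s, f i) = ∑ i ∈ s, T.R x y z (f i) := by
  induction s using Finset.cons_induction with
  | empty => simp [R_zero₄]
  | cons a s ha ih => simp [Finset.sum_cons, T.add_fth, ih]

lemma expand_coord (x : E) : x = ∑ i, x i • stdBasis n i := by
  ext j
  rw [show ((∑ i, x i • stdBasis n i) j) = ∑ i, (x i • stdBasis n i) j by
    simp only [WithLp.ofLp_sum, Finset.sum_apply]]
  simp [stdBasis, EuclideanSpace.single_apply]

lemma J_skew_coord (hJ : IsOrthCplxStructure J) (a b : Fin n) :
    (J (stdBasis n a)) b = -(J (stdBasis n b)) a := by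
  have skew : ∀ x y : E, (inner ℝ (J x) y : ℝ) = -(inner ℝ x (J y) : ℝ) := by
    intro x y
    have h1 := hJ.2 x (J y)
    rw [hJ.1 y] at h1
    rw [← h1, inner_neg_right, neg_neg]
  have coord : ∀ (z : E) (b : Fin n), z b = (inner ℝ (stdBasis n b) z : ℝ) := by
    intro z b
    simp [stdBasis, EuclideanSpace.inner_single_left]
  rw [coord (J (stdBasis n a)) b, coord (J (stdBasis n b)) a]
  have h1 := skew (stdBasis n b) (stdBasis n a)
  have h2 : (inner ℝ (J (stdBasis n b)) (stdBasis n a) : ℝ)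
      = inner ℝ (stdBasis n a) (J (stdBasis n b)) := real_inner_comm _ _
  linarith

/-- Core trace lemma: for bilinear `B`, `∑ B(J e_a, e_a) = -∑ B(e_a, J e_a)`. -/
lemma trace_skew (hJ : IsOrthCplxStructure J) (B : E → E → ℝ)
    (hs1 : ∀ (c : ℝ) (u v : E), B (c • u) v = c * B u v)
    (hsum1 : ∀ (f : Fin n → E) (v : E), B (∑ i, f i) v = ∑ i, B (f i) v)
    (hs2 : ∀ (c : ℝ) (u v : E), B u (c • v) = c * B u v)
    (hsum2 : ∀ (u : E) (f : Fin n → E), B u (∑ i, f i) = ∑ i, B u (f i)) :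
    ∑ a, B (J (stdBasis n a)) (stdBasis n a) = -∑ a, B (stdBasis n a) (J (stdBasis n a)) := by
  have lhs_eq : ∀ a, B (J (stdBasis n a)) (stdBasis n a)
      = ∑ b, (J (stdBasis n a)) b * B (stdBasis n b) (stdBasis n a) := by
    intro a
    conv_lhs => rw [expand_coord (J (stdBasis n a))]
    rw [hsum1]
    exact Finset.sum_congr rfl fun b _ => hs1 _ _ _
  have rhs_eq : ∀ b, B (stdBasis n b) (J (stdBasis n b))
      = ∑ a, (J (stdBasis n b)) a * B (stdBasis n b) (stdBasis n a) := by
    intro b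
    conv_lhs => rw [expand_coord (J (stdBasis n b))]
    rw [hsum2]
    exact Finset.sum_congr rfl fun a _ => hs2 _ _ _
  simp only [lhs_eq, rhs_eq]
  rw [Finset.sum_comm, ← Finset.sum_neg_distrib]
  refine Finset.sum_congr rfl fun b _ => ?_
  rw [← Finset.sum_neg_distrib]
  refine Finset.sum_congr rfl fun a _ => ?_
  rw [J_skew_coord hJ a b]
  ring

end BergerAux

namespace Stage3
open Finset
variable {n : ℕ} (T : AlgCurvatureTensor (EuclideanSpace ℝ (Fin n)))
variable {J : EuclideanSpace ℝ (Fin n) →ₗ[ℝ] EuclideanSpace ℝ (Fin n)}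

local notation "E" => EuclideanSpace ℝ (Fin n)
local notation "e" => stdBasis n

lemma R_neg₄ (x y z w : EuclideanSpace ℝ (Fin n)) : T.R x y z (-w) = -T.R x y z w := by
  rw [show (-w : EuclideanSpace ℝ (Fin n)) = (-1 : ℝ) • w by rw [neg_one_smul], T.smul_fth]
  ring

lemma trace_skewL (hJ : IsOrthCplxStructure J) (a b : Fin n → EuclideanSpace ℝ (Fin n))
    (L : EuclideanSpace ℝ (Fin n) →ₗ[ℝ] EuclideanSpace ℝ (Fin n)) :
    (∑ i, ∑ j, T.R (a j) (J (e i)) (b j) (L (e i)))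
      = -∑ i, ∑ j, T.R (a j) (e i) (b j) (L (J (e i))) := by
  have hs1 : ∀ (c : ℝ) (u v : E),
      (∑ j, T.R (a j) (c • u) (b j) (L v)) = c * ∑ j, T.R (a j) u (b j) (L v) := by
    intro c u v
    rw [Finset.mul_sum]
    exact Finset.sum_congr rfl fun j _ => T.smul_snd c _ _ _ _
  have hsum1 : ∀ (f : Fin n → E) (v : E),
      (∑ j, T.R (a j) (∑ i, f i) (b j) (L v)) = ∑ i, ∑ j, T.R (a j) (f i) (b j) (L v) := by
    intro f v
    rw [Finset.sum_comm]
    exact Finset.sum_congr rfl fun j _ => BergerAux.R_sum₂ T univ (a j) f (b j) (L v)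
  have hs2 : ∀ (c : ℝ) (u v : E),
      (∑ j, T.R (a j) u (b j) (L (c • v))) = c * ∑ j, T.R (a j) u (b j) (L v) := by
    intro c u v
    rw [L.map_smul, Finset.mul_sum]
    exact Finset.sum_congr rfl fun j _ => T.smul_fth c _ _ _ _
  have hsum2 : ∀ (u : E) (f : Fin n → E),
      (∑ j, T.R (a j) u (b j) (L (∑ i, f i))) = ∑ i, ∑ j, T.R (a j) u (b j) (L (f i)) := by
    intro u f
    rw [map_sum L f univ, Finset.sum_comm]
    exact Finset.sum_congr rfl fun j _ => BergerAux.R_sum₄ T univ (a j) u (b j) (fun i => L (f i))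
  have key := BergerAux.trace_skew (J := J) hJ
    (fun u v => ∑ j, T.R (a j) u (b j) (L v))
    (fun c u v => hs1 c u v) (fun f v => hsum1 f v)
    (fun c u v => hs2 c u v) (fun u f => hsum2 u f)
  simpa only using key

lemma trace_JJ' (hJ : IsOrthCplxStructure J) (a b : Fin n → EuclideanSpace ℝ (Fin n)) :
    (∑ i, ∑ j, T.R (a j) (J (e i)) (b j) (J (e i)))
      = ∑ i, ∑ j, T.R (a j) (e i) (b j) (e i) := by
  have key := trace_skewL T hJ a b J
  rw [key, ← Finset.sum_neg_distrib]
  refine Finset.sum_congr rfl fun i _ => ?_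
  rw [← Finset.sum_neg_distrib]
  refine Finset.sum_congr rfl fun j _ => ?_
  rw [hJ.1 (e i), R_neg₄, neg_neg]

lemma Q3_eq : (∑ i, ∑ j, T.R (e i) (J (e j)) (e j) (J (e i))) = starScalarCurv T J :=
  Finset.sum_comm

lemma Q2_eq (hJ : IsOrthCplxStructure J) :
    (∑ i, ∑ j, T.R (e i) (J (e j)) (e i) (J (e j))) = scalarCurv T := by
  rw [Finset.sum_comm, trace_JJ' T hJ (fun i => e i) (fun i => e i),
    scalarCurv, Finset.sum_comm]

lemma P_eq (hJ : IsOrthCplxStructure J) :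
    (∑ i, ∑ j, T.R (e i) (J (e i)) (e j) (J (e j))) = 2 * starScalarCurv T J := by
  set P := ∑ i, ∑ j, T.R (e i) (J (e i)) (e j) (J (e j)) with hP
  set T2 := ∑ i, ∑ j, T.R (J (e i)) (e j) (e i) (J (e j)) with hT2
  set T3 := ∑ i, ∑ j, T.R (e j) (e i) (J (e i)) (J (e j)) with hT3
  have hbianchi : P + T2 + T3 = 0 := by
    rw [hP, hT2, hT3]
    simp only [← Finset.sum_add_distrib]
    simp only [T.bianchi, Finset.sum_const_zero]
  have h23 : T2 = T3 := by
    have step1 : T2 = ∑ i, ∑ j, T.R (e j) (J (e i)) (J (e j)) (e i) := by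
      rw [hT2]
      refine Finset.sum_congr rfl fun i _ => Finset.sum_congr rfl fun j _ => ?_
      have h1 := T.antisymm₁₂ (J (e i)) (e j) (e i) (J (e j))
      have h2 := T.antisymm₃₄ (e j) (J (e i)) (J (e j)) (e i)
      linarith
    have step2 : (∑ i, ∑ j, T.R (e j) (J (e i)) (J (e j)) (e i))
        = -∑ i, ∑ j, T.R (e j) (e i) (J (e j)) (J (e i)) := by
      have := trace_skewL T hJ (fun j => e j) (fun j => J (e j)) (LinearMap.id)
      simpa only [LinearMap.id_apply] using this
    have step3 : (∑ i, ∑ j, T.R (e j) (e i) (J (e j)) (J (e i))) = -T3 := by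
      rw [hT3, ← Finset.sum_neg_distrib]
      refine Finset.sum_congr rfl fun i _ => ?_
      rw [← Finset.sum_neg_distrib]
      refine Finset.sum_congr rfl fun j _ => ?_
      have := T.antisymm₃₄ (e j) (e i) (J (e j)) (J (e i))
      linarith
    rw [step1, step2, step3, neg_neg]
  have hstar : starScalarCurv T J
      + (∑ i : Fin n, ∑ a : Fin n, T.R (J (e i)) (e i) (e a) (J (e a)))
      + (∑ i : Fin n, ∑ a : Fin n, T.R (e i) (e a) (J (e i)) (J (e a))) = 0 := by
    rw [starScalarCurv]
    simp only [← Finset.sum_add_distrib]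
    simp only [T.bianchi, Finset.sum_const_zero]
  have hX : (∑ i : Fin n, ∑ a : Fin n, T.R (J (e i)) (e i) (e a) (J (e a))) = -P := by
    rw [hP, ← Finset.sum_neg_distrib]
    refine Finset.sum_congr rfl fun i _ => ?_
    rw [← Finset.sum_neg_distrib]
    refine Finset.sum_congr rfl fun a _ => ?_
    have := T.antisymm₁₂ (J (e i)) (e i) (e a) (J (e a))
    linarith
  have hY : (∑ i : Fin n, ∑ a : Fin n, T.R (e i) (e a) (J (e i)) (J (e a))) = -T3 := by
    rw [Finset.sum_comm, hT3, ← Finset.sum_neg_distrib]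
    refine Finset.sum_congr rfl fun i _ => ?_
    rw [← Finset.sum_neg_distrib]
    refine Finset.sum_congr rfl fun j _ => ?_
    have := T.antisymm₃₄ (e j) (e i) (J (e j)) (J (e i))
    linarith
  rw [hX, hY] at hstar
  linarith
end Stage3

namespace Stage4
open Real Set

noncomputable def I1d (k : ℕ) : ℝ := ∫ t : ℝ, t ^ k * Real.exp (-t^2)
noncomputable def Jr (m : ℕ) : ℝ := ∫ t in Set.Ioi (0:ℝ), t ^ m * Real.exp (-t^2)

lemma integrable1d (k : ℕ) : MeasureTheory.Integrable fun t : ℝ => t ^ k * Real.exp (-t^2) := by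
  have h : (-1:ℝ) < (k:ℝ) := lt_of_lt_of_le (by norm_num) (Nat.cast_nonneg k)
  simpa [Real.rpow_natCast, neg_one_mul] using integrable_rpow_mul_exp_neg_mul_sq one_pos h

lemma Jr_eq (m : ℕ) : Jr m = (1/2) * Real.Gamma (((m:ℝ)+1)/2) := by
  rw [Jr]
  rw [show (∫ t in Set.Ioi (0:ℝ), t ^ m * Real.exp (-t^2))
      = ∫ t in Set.Ioi (0:ℝ), t ^ ((m:ℝ)) * Real.exp (-t ^ ((2:ℝ))) by
    refine MeasureTheory.setIntegral_congr_fun measurableSet_Ioi (fun x hx => ?_)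
    rw [Real.rpow_natCast, show ((2:ℝ)) = ((2:ℕ):ℝ) by norm_num, Real.rpow_natCast]]
  rw [integral_rpow_mul_exp_neg_rpow two_pos (lt_of_lt_of_le (by norm_num) (Nat.cast_nonneg m))]

lemma Jr_pos (m : ℕ) : 0 < Jr m := by
  rw [Jr_eq]
  positivity

lemma I1d_eq (k : ℕ) : I1d k = ((-1:ℝ)^k + 1) * Jr k := by
  have hint := integrable1d k
  rw [I1d, ← intervalIntegral.integral_Iic_add_Ioi (b := (0:ℝ)) hint.integrableOn hint.integrableOn]
  have h1 : (∫ t in Iic (0:ℝ), t ^ k * Real.exp (-t^2))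
      = ∫ t in Ioi (0:ℝ), (-t) ^ k * Real.exp (-(-t)^2) := by
    rw [integral_comp_neg_Ioi 0 (fun t => t ^ k * Real.exp (-t^2)), neg_zero]
  rw [h1]
  have h2 : (∫ t in Ioi (0:ℝ), (-t) ^ k * Real.exp (-(-t)^2))
      = (-1:ℝ)^k * ∫ t in Ioi (0:ℝ), t ^ k * Real.exp (-t^2) := by
    rw [← MeasureTheory.integral_const_mul]
    refine MeasureTheory.setIntegral_congr_fun measurableSet_Ioi (fun x hx => ?_)
    rw [neg_pow, neg_sq]
    ring
  rw [h2, Jr]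
  ring

lemma I1d_one : I1d 1 = 0 := by rw [I1d_eq]; norm_num
lemma I1d_three : I1d 3 = 0 := by rw [I1d_eq]; norm_num
lemma I1d_zero_eq : I1d 0 = Real.Gamma (1/2) := by rw [I1d_eq, Jr_eq]; norm_num; ring
lemma I1d_zero_pos : 0 < I1d 0 := by
  rw [I1d_zero_eq]; exact Real.Gamma_pos_of_pos (by norm_num)

lemma I1d_two : I1d 2 = I1d 0 / 2 := by
  rw [I1d_eq, I1d_zero_eq, Jr_eq]
  norm_num
  rw [show ((3:ℝ))/2 = 1/2 + 1 by norm_num, Real.Gamma_add_one (by norm_num)]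
  ring

lemma I1d_four : I1d 4 = 3 * I1d 0 / 4 := by
  rw [I1d_eq, I1d_zero_eq, Jr_eq]
  norm_num
  rw [show ((5:ℝ))/2 = 3/2 + 1 by norm_num, Real.Gamma_add_one (by norm_num),
    show ((3:ℝ))/2 = 1/2 + 1 by norm_num, Real.Gamma_add_one (by norm_num)]
  ring

lemma Jr_ratio (N : ℕ) (hN : 1 ≤ N) : Jr (2*N + 3) = (N * (N+1) : ℝ) * Jr (2*N - 1) := by
  have h1 : ((2*N - 1 : ℕ) : ℝ) = 2*(N:ℝ) - 1 := by
    have : (1:ℕ) ≤ 2*N := le_trans hN (by omega)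
    push_cast [this]
    ring
  rw [Jr_eq, Jr_eq, h1]
  have hN0 : (N:ℝ) ≠ 0 := Nat.cast_ne_zero.mpr (by omega)
  rw [show ((((2*N+3 : ℕ)):ℝ) + 1)/2 = ((N:ℝ)+1)+1 by push_cast; ring]
  rw [Real.Gamma_add_one (by positivity)]
  rw [show ((N:ℝ)+1) * Real.Gamma ((N:ℝ)+1) = ((N:ℝ)+1) * ((N:ℝ) * Real.Gamma (N:ℝ)) by
    rw [Real.Gamma_add_one hN0]]
  rw [show (2*(N:ℝ) - 1 + 1)/2 = (N:ℝ) by ring]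
  ring
end Stage4

namespace Stage5
open Finset Real MeasureTheory

variable {n : ℕ}

noncomputable def dd (a b : Fin n) : ℝ := if a = b then 1 else 0

def cnt (i j k l m : Fin n) : ℕ :=
  (if i = m then 1 else 0) + (if j = m then 1 else 0)
    + (if k = m then 1 else 0) + (if l = m then 1 else 0)

lemma split_mono (x : Fin n → ℝ) (i j k l : Fin n) :
    (x i * x j * x k * x l) * ∏ m, Real.exp (-(x m)^2)
      = ∏ m, ((x m) ^ (cnt i j k l m) * Real.exp (-(x m)^2)) := by
  rw [Finset.prod_mul_distrib]
  congr 1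
  have h : ∀ a : Fin n, (∏ m, (x m) ^ (if a = m then 1 else 0)) = x a := by
    intro a
    calc (∏ m, (x m) ^ (if a = m then 1 else 0))
        = ∏ m, (if a = m then x m else 1) :=
          Finset.prod_congr rfl fun m _ => by split <;> simp
      _ = x a := by rw [Finset.prod_ite_eq]; simp
  calc x i * x j * x k * x l
      = (∏ m, (x m) ^ (if i = m then 1 else 0)) * (∏ m, (x m) ^ (if j = m then 1 else 0))
        * (∏ m, (x m) ^ (if k = m then 1 else 0)) * (∏ m, (x m) ^ (if l = m then 1 else 0)) := by
        rw [h i, h j, h k, h l]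
    _ = ∏ m, (x m) ^ (cnt i j k l m) := by
        rw [← Finset.prod_mul_distrib, ← Finset.prod_mul_distrib, ← Finset.prod_mul_distrib]
        exact Finset.prod_congr rfl fun m _ => by rw [cnt, pow_add, pow_add, pow_add]

lemma integrable_mono (i j k l : Fin n) :
    Integrable (fun x : Fin n → ℝ => (x i * x j * x k * x l) * ∏ m, Real.exp (-(x m)^2)) := by
  rw [show (fun x : Fin n → ℝ => (x i * x j * x k * x l) * ∏ m, Real.exp (-(x m)^2))
      = fun x => ∏ m, ((x m) ^ (cnt i j k l m) * Real.exp (-(x m)^2)) from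
    funext fun x => split_mono x i j k l]
  exact Integrable.fintype_prod (f := fun m (t : ℝ) => t ^ (cnt i j k l m) * Real.exp (-t^2))
    (fun m => Stage4.integrable1d _)

lemma integral_mono (i j k l : Fin n) :
    ∫ x : Fin n → ℝ, (x i * x j * x k * x l) * ∏ m, Real.exp (-(x m)^2)
      = ∏ m, Stage4.I1d (cnt i j k l m) := by
  rw [show (fun x : Fin n → ℝ => (x i * x j * x k * x l) * ∏ m, Real.exp (-(x m)^2))
      = fun x => ∏ m, ((x m) ^ (cnt i j k l m) * Real.exp (-(x m)^2)) from
    funext fun x => split_mono x i j k l]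
  rw [MeasureTheory.integral_fintype_prod_volume_eq_prod
    (f := fun m (t : ℝ) => t ^ (cnt i j k l m) * Real.exp (-t^2))]
  rfl

lemma prod_eq_single_pow (f : Fin n → ℝ) (i : Fin n) (c : ℝ) (h : ∀ m, m ≠ i → f m = c) :
    ∏ m, f m = f i * c ^ (n - 1) := by
  rw [← Finset.mul_prod_erase univ f (mem_univ i)]
  congr 1
  rw [Finset.prod_congr rfl (fun m hm => h m (Finset.ne_of_mem_erase hm)), Finset.prod_const,
    Finset.card_erase_of_mem (mem_univ i), Finset.card_univ, Fintype.card_fin]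

lemma prod_eq_pair_pow (f : Fin n → ℝ) {i k : Fin n} (hik : i ≠ k) (c : ℝ)
    (h : ∀ m, m ≠ i → m ≠ k → f m = c) :
    ∏ m, f m = f i * f k * c ^ (n - 2) := by
  have hk : k ∈ univ.erase i := Finset.mem_erase.mpr ⟨hik.symm, mem_univ k⟩
  rw [← Finset.mul_prod_erase univ f (mem_univ i), ← Finset.mul_prod_erase _ f hk, ← mul_assoc,
    Finset.prod_congr rfl (fun m hm => h m
      (Finset.ne_of_mem_erase (Finset.mem_of_mem_erase hm)) (Finset.ne_of_mem_erase hm)),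
    Finset.prod_const, Finset.card_erase_of_mem hk, Finset.card_erase_of_mem (mem_univ i),
    Finset.card_univ, Fintype.card_fin, show n - 1 - 1 = n - 2 from by omega]

lemma odd_case (g : Fin n → ℕ) (a : Fin n) (ha : g a = 1) :
    ∏ m, Stage4.I1d (g m) = 0 :=
  Finset.prod_eq_zero (mem_univ a) (by rw [ha]; exact Stage4.I1d_one)

lemma two_pair_case (g : Fin n → ℕ) {a b : Fin n} (hab : a ≠ b)
    (ha : g a = 2) (hb : g b = 2) (hother : ∀ m, m ≠ a → m ≠ b → g m = 0) :
    ∏ m, Stage4.I1d (g m) = Stage4.I1d 0 ^ n / 4 := by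
  have h2n : 2 ≤ n := by
    by_contra h
    push_neg at h
    have hi := a.isLt
    have hk := b.isLt
    exact hab (Fin.ext (by omega))
  rw [prod_eq_pair_pow (fun m => Stage4.I1d (g m)) hab (Stage4.I1d 0)
    (fun m h1 h2 => by simp [hother m h1 h2])]
  rw [ha, hb, Stage4.I1d_two]
  have hpow : Stage4.I1d 0 ^ n = Stage4.I1d 0 ^ (n - 2) * Stage4.I1d 0 ^ 2 := by
    rw [← pow_add]
    congr 1
    omega
  rw [hpow]
  ring

lemma four_case (g : Fin n → ℕ) (a : Fin n) (ha : g a = 4)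
    (hother : ∀ m, m ≠ a → g m = 0) :
    ∏ m, Stage4.I1d (g m) = 3 * (Stage4.I1d 0 ^ n) / 4 := by
  have h1n : 1 ≤ n := a.pos
  rw [prod_eq_single_pow (fun m => Stage4.I1d (g m)) a (Stage4.I1d 0)
    (fun m h1 => by simp [hother m h1])]
  rw [ha, Stage4.I1d_four]
  have hpow : Stage4.I1d 0 ^ n = Stage4.I1d 0 ^ (n - 1) * Stage4.I1d 0 ^ 1 := by
    rw [← pow_add]
    congr 1
    omega
  rw [hpow]
  ring

lemma prodI (i j k l : Fin n) :
    (∏ m, Stage4.I1d (cnt i j k l m))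
      = (Stage4.I1d 0 ^ n / 4) * (dd i j * dd k l + dd i k * dd j l + dd i l * dd j k) := by
  by_cases hij : i = j
  · subst hij
    by_cases hkl : k = l
    · subst hkl
      by_cases hik : i = k
      · subst hik
        rw [four_case _ i (by simp [cnt]) (fun m hm => by simp [cnt, Ne.symm hm])]
        simp [dd]
        ring
      · rw [two_pair_case _ hik (by simp [cnt, Ne.symm hik, hik])
          (by simp [cnt, Ne.symm hik, hik]) (fun m h1 h2 => by
            simp [cnt, Ne.symm h1, Ne.symm h2])]
        simp [dd, hik]
    · by_cases hik : i = k
      · subst hik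
        rw [odd_case _ l (by simp [cnt, hkl, Ne.symm hkl])]
        simp [dd, hkl]
      · rw [odd_case _ k (by simp [cnt, hik, Ne.symm hkl, hkl])]
        simp [dd, hkl, hik]
  · by_cases hkl : k = l
    · subst hkl
      by_cases hik : i = k
      · subst hik
        rw [odd_case _ j (by simp [cnt, hij, Ne.symm hij])]
        simp [dd, hij, Ne.symm hij]
      · rw [odd_case _ i (by simp [cnt, Ne.symm hij, Ne.symm hik])]
        simp [dd, hij, hik]
    · by_cases hik : i = k
      · subst hik
        by_cases hjl : j = l
        · subst hjl
          rw [two_pair_case _ hij (by simp [cnt, Ne.symm hij, hij])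
            (by simp [cnt, Ne.symm hij, hij]) (fun m h1 h2 => by
              simp [cnt, Ne.symm h1, Ne.symm h2])]
          simp [dd, hij, hkl]
        · rw [odd_case _ j (by simp [cnt, Ne.symm hij, hij, Ne.symm hjl, hjl])]
          simp [dd, hij, hjl, hkl]
      · by_cases hil : i = l
        · subst hil
          by_cases hjk : j = k
          · subst hjk
            rw [two_pair_case _ hij (by simp [cnt, Ne.symm hij, hij])
              (by simp [cnt, Ne.symm hij, hij]) (fun m h1 h2 => by
                simp [cnt, Ne.symm h1, Ne.symm h2])]
            simp [dd, hij, hik]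
          · rw [odd_case _ j (by simp [cnt, Ne.symm hij, hij, Ne.symm hjk, hjk])]
            simp [dd, hij, hjk, hik]
        · rw [odd_case _ i (by simp [cnt, Ne.symm hij, Ne.symm hik, Ne.symm hil])]
          simp [dd, hij, hik, hil]

end Stage5

namespace Stage6
open Finset Real MeasureTheory

variable {n : ℕ} (T : AlgCurvatureTensor (EuclideanSpace ℝ (Fin n)))
variable {J : EuclideanSpace ℝ (Fin n) →ₗ[ℝ] EuclideanSpace ℝ (Fin n)}

local notation "e" => stdBasis n

lemma Hexp (x : EuclideanSpace ℝ (Fin n)) :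
    T.R x (J x) x (J x)
      = ∑ i, ∑ j, ∑ k, ∑ l,
          (x i * x j * x k * x l) * T.R (e i) (J (e j)) (e k) (J (e l)) := by
  have hJx' : J (∑ i, x i • stdBasis n i) = ∑ i, x i • J (stdBasis n i) := by
    rw [map_sum J (fun i => x i • stdBasis n i) univ]
    exact Finset.sum_congr rfl fun i _ => J.map_smul _ _
  conv_lhs => rw [BergerAux.expand_coord x]
  rw [hJx', BergerAux.R_sum₁]
  refine Finset.sum_congr rfl fun i _ => ?_
  rw [T.smul_fst, BergerAux.R_sum₂]
  simp only [Finset.mul_sum]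
  refine Finset.sum_congr rfl fun j _ => ?_
  rw [T.smul_snd, BergerAux.R_sum₃]
  simp only [Finset.mul_sum]
  refine Finset.sum_congr rfl fun k _ => ?_
  rw [T.smul_trd, BergerAux.R_sum₄]
  simp only [Finset.mul_sum]
  refine Finset.sum_congr rfl fun l _ => ?_
  rw [T.smul_fth]
  ring

lemma norm_prod (x : EuclideanSpace ℝ (Fin n)) :
    Real.exp (-‖x‖^2) = ∏ m, Real.exp (-(x m)^2) := by
  have h : ‖x‖^2 = ∑ m, x m ^ 2 := by
    rw [EuclideanSpace.norm_sq_eq]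
    simp [sq_abs]
  rw [h, ← Finset.sum_neg_distrib, Real.exp_sum]

lemma gaussTotal : (∫ x : EuclideanSpace ℝ (Fin n), Real.exp (-‖x‖^2))
    = Stage4.I1d 0 ^ n := by
  have hmp := EuclideanSpace.volume_preserving_symm_measurableEquiv_toLp (Fin n)
  have hI0 : Stage4.I1d 0 = ∫ t : ℝ, Real.exp (-t^2) := by rw [Stage4.I1d]; simp
  calc (∫ x : EuclideanSpace ℝ (Fin n), Real.exp (-‖x‖^2))
      = ∫ x : EuclideanSpace ℝ (Fin n), ∏ m, Real.exp (-(x m)^2) := by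
        congr 1
        funext x
        exact norm_prod x
    _ = ∫ y : Fin n → ℝ, ∏ m, Real.exp (-(y m)^2) :=
        hmp.integral_comp' (fun y => ∏ m, Real.exp (-(y m)^2))
    _ = (∫ t : ℝ, Real.exp (-t^2)) ^ n := by
        rw [integral_fintype_prod_volume_eq_pow (ι := Fin n) (fun t : ℝ => Real.exp (-t^2))]
        simp
    _ = Stage4.I1d 0 ^ n := by rw [hI0]

lemma gaussH (hJ : IsOrthCplxStructure J) :
    (∫ x : EuclideanSpace ℝ (Fin n), Real.exp (-‖x‖^2) * T.R x (J x) x (J x))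
      = (Stage4.I1d 0 ^ n / 4) * (3 * starScalarCurv T J + scalarCurv T) := by
  have hmp := EuclideanSpace.volume_preserving_symm_measurableEquiv_toLp (Fin n)
  have key1 : ∀ x : EuclideanSpace ℝ (Fin n),
      Real.exp (-‖x‖^2) * T.R x (J x) x (J x)
        = ∑ p : Fin n × Fin n × Fin n × Fin n,
            T.R (e p.1) (J (e p.2.1)) (e p.2.2.1) (J (e p.2.2.2))
              * ((x p.1 * x p.2.1 * x p.2.2.1 * x p.2.2.2) * ∏ m, Real.exp (-(x m)^2)) := by
    intro x
    rw [Hexp T x, norm_prod x]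
    simp only [Fintype.sum_prod_type]
    simp only [Finset.mul_sum]
    refine Finset.sum_congr rfl fun i _ => Finset.sum_congr rfl fun j _ =>
      Finset.sum_congr rfl fun k _ => Finset.sum_congr rfl fun l _ => ?_
    ring
  calc (∫ x : EuclideanSpace ℝ (Fin n), Real.exp (-‖x‖^2) * T.R x (J x) x (J x))
      = ∫ x : EuclideanSpace ℝ (Fin n),
          ∑ p : Fin n × Fin n × Fin n × Fin n,
            T.R (e p.1) (J (e p.2.1)) (e p.2.2.1) (J (e p.2.2.2))
              * ((x p.1 * x p.2.1 * x p.2.2.1 * x p.2.2.2) * ∏ m, Real.exp (-(x m)^2)) := by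
        congr 1
        funext x
        exact key1 x
    _ = ∫ y : Fin n → ℝ,
          ∑ p : Fin n × Fin n × Fin n × Fin n,
            T.R (e p.1) (J (e p.2.1)) (e p.2.2.1) (J (e p.2.2.2))
              * ((y p.1 * y p.2.1 * y p.2.2.1 * y p.2.2.2) * ∏ m, Real.exp (-(y m)^2)) :=
        hmp.integral_comp' (fun y : Fin n → ℝ =>
          ∑ p : Fin n × Fin n × Fin n × Fin n,
            T.R (e p.1) (J (e p.2.1)) (e p.2.2.1) (J (e p.2.2.2))
              * ((y p.1 * y p.2.1 * y p.2.2.1 * y p.2.2.2) * ∏ m, Real.exp (-(y m)^2)))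
    _ = ∑ p : Fin n × Fin n × Fin n × Fin n,
          T.R (e p.1) (J (e p.2.1)) (e p.2.2.1) (J (e p.2.2.2))
            * ∫ y : Fin n → ℝ,
                (y p.1 * y p.2.1 * y p.2.2.1 * y p.2.2.2) * ∏ m, Real.exp (-(y m)^2) := by
        rw [integral_finset_sum univ (fun p _ =>
          (Stage5.integrable_mono p.1 p.2.1 p.2.2.1 p.2.2.2).const_mul _)]
        exact Finset.sum_congr rfl fun p _ => integral_const_mul _ _
    _ = ∑ p : Fin n × Fin n × Fin n × Fin n,
          T.R (e p.1) (J (e p.2.1)) (e p.2.2.1) (J (e p.2.2.2))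
            * ((Stage4.I1d 0 ^ n / 4)
              * (Stage5.dd p.1 p.2.1 * Stage5.dd p.2.2.1 p.2.2.2
                + Stage5.dd p.1 p.2.2.1 * Stage5.dd p.2.1 p.2.2.2
                + Stage5.dd p.1 p.2.2.2 * Stage5.dd p.2.1 p.2.2.1)) := by
        refine Finset.sum_congr rfl fun p _ => ?_
        rw [Stage5.integral_mono, Stage5.prodI]
    _ = (Stage4.I1d 0 ^ n / 4)
          * ((∑ p : Fin n × Fin n × Fin n × Fin n,
                T.R (e p.1) (J (e p.2.1)) (e p.2.2.1) (J (e p.2.2.2))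
                  * (Stage5.dd p.1 p.2.1 * Stage5.dd p.2.2.1 p.2.2.2))
            + (∑ p : Fin n × Fin n × Fin n × Fin n,
                T.R (e p.1) (J (e p.2.1)) (e p.2.2.1) (J (e p.2.2.2))
                  * (Stage5.dd p.1 p.2.2.1 * Stage5.dd p.2.1 p.2.2.2))
            + (∑ p : Fin n × Fin n × Fin n × Fin n,
                T.R (e p.1) (J (e p.2.1)) (e p.2.2.1) (J (e p.2.2.2))
                  * (Stage5.dd p.1 p.2.2.2 * Stage5.dd p.2.1 p.2.2.1))) := by
        rw [show ((∑ p : Fin n × Fin n × Fin n × Fin n,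
                T.R (e p.1) (J (e p.2.1)) (e p.2.2.1) (J (e p.2.2.2))
                  * (Stage5.dd p.1 p.2.1 * Stage5.dd p.2.2.1 p.2.2.2))
            + (∑ p : Fin n × Fin n × Fin n × Fin n,
                T.R (e p.1) (J (e p.2.1)) (e p.2.2.1) (J (e p.2.2.2))
                  * (Stage5.dd p.1 p.2.2.1 * Stage5.dd p.2.1 p.2.2.2))
            + (∑ p : Fin n × Fin n × Fin n × Fin n,
                T.R (e p.1) (J (e p.2.1)) (e p.2.2.1) (J (e p.2.2.2))
                  * (Stage5.dd p.1 p.2.2.2 * Stage5.dd p.2.1 p.2.2.1)))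
          = ∑ p : Fin n × Fin n × Fin n × Fin n,
              (T.R (e p.1) (J (e p.2.1)) (e p.2.2.1) (J (e p.2.2.2))
                  * (Stage5.dd p.1 p.2.1 * Stage5.dd p.2.2.1 p.2.2.2)
                + T.R (e p.1) (J (e p.2.1)) (e p.2.2.1) (J (e p.2.2.2))
                  * (Stage5.dd p.1 p.2.2.1 * Stage5.dd p.2.1 p.2.2.2)
                + T.R (e p.1) (J (e p.2.1)) (e p.2.2.1) (J (e p.2.2.2))
                  * (Stage5.dd p.1 p.2.2.2 * Stage5.dd p.2.1 p.2.2.1)) from by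
          simp only [← Finset.sum_add_distrib]]
        rw [Finset.mul_sum]
        refine Finset.sum_congr rfl fun p _ => ?_
        ring
    _ = (Stage4.I1d 0 ^ n / 4) * (3 * starScalarCurv T J + scalarCurv T) := by
        congr 1
        have h1 : (∑ p : Fin n × Fin n × Fin n × Fin n,
              T.R (e p.1) (J (e p.2.1)) (e p.2.2.1) (J (e p.2.2.2))
                * (Stage5.dd p.1 p.2.1 * Stage5.dd p.2.2.1 p.2.2.2))
            = ∑ i, ∑ j, T.R (e i) (J (e i)) (e j) (J (e j)) := by
          simp only [Fintype.sum_prod_type, Stage5.dd]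
          simp [mul_ite, ite_mul, mul_zero, zero_mul, mul_one, Finset.sum_ite_eq,
            Finset.sum_ite_eq']
        have h2 : (∑ p : Fin n × Fin n × Fin n × Fin n,
              T.R (e p.1) (J (e p.2.1)) (e p.2.2.1) (J (e p.2.2.2))
                * (Stage5.dd p.1 p.2.2.1 * Stage5.dd p.2.1 p.2.2.2))
            = ∑ i, ∑ j, T.R (e i) (J (e j)) (e i) (J (e j)) := by
          simp only [Fintype.sum_prod_type, Stage5.dd]
          simp [mul_ite, ite_mul, mul_zero, zero_mul, mul_one, Finset.sum_ite_eq,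
            Finset.sum_ite_eq']
        have h3 : (∑ p : Fin n × Fin n × Fin n × Fin n,
              T.R (e p.1) (J (e p.2.1)) (e p.2.2.1) (J (e p.2.2.2))
                * (Stage5.dd p.1 p.2.2.2 * Stage5.dd p.2.1 p.2.2.1))
            = ∑ i, ∑ j, T.R (e i) (J (e j)) (e j) (J (e i)) := by
          simp only [Fintype.sum_prod_type, Stage5.dd]
          simp [mul_ite, ite_mul, mul_zero, zero_mul, mul_one, Finset.sum_ite_eq,
            Finset.sum_ite_eq']
        rw [h1, h2, h3, Stage3.P_eq T hJ, Stage3.Q2_eq T hJ, Stage3.Q3_eq T]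
        ring
end Stage6

namespace Stage7
open Finset Real MeasureTheory Set Metric

variable {n : ℕ} (T : AlgCurvatureTensor (EuclideanSpace ℝ (Fin n)))
variable {J : EuclideanSpace ℝ (Fin n) →ₗ[ℝ] EuclideanSpace ℝ (Fin n)}

lemma hom4 (c : ℝ) (v : EuclideanSpace ℝ (Fin n)) :
    T.R (c • v) (J (c • v)) (c • v) (J (c • v)) = c^4 * T.R v (J v) v (J v) := by
  rw [J.map_smul, T.smul_fst, T.smul_snd, T.smul_trd, T.smul_fth]
  ring

lemma radial (hn : 0 < n) :
    (∫ r : Ioi (0:ℝ), ((r : ℝ)^4 * Real.exp (-(r:ℝ)^2)) ∂(Measure.volumeIoiPow (n-1)))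
      = Stage4.Jr (n + 3) := by
  simp only [Measure.volumeIoiPow, ENNReal.ofReal]
  rw [integral_withDensity_eq_integral_smul
      (f := fun r : Ioi (0:ℝ) => Real.toNNReal ((r:ℝ) ^ (n-1)))
      ((measurable_subtype_coe.pow_const _).real_toNNReal) _,
    integral_subtype_comap measurableSet_Ioi
      (fun a : ℝ => Real.toNNReal (a ^ (n-1)) • (a^4 * Real.exp (-a^2)))]
  rw [Stage4.Jr]
  refine setIntegral_congr_fun measurableSet_Ioi (fun x hx => ?_)
  rw [NNReal.smul_def, Real.coe_toNNReal _ (pow_nonneg (le_of_lt hx) _)]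
  rw [smul_eq_mul, ← mul_assoc, ← pow_add, show n - 1 + 4 = n + 3 by omega]

lemma polarH (hn : 0 < n) :
    (∫ x : EuclideanSpace ℝ (Fin n), Real.exp (-‖x‖^2) * T.R x (J x) x (J x))
      = (∫ v : Metric.sphere (0 : EuclideanSpace ℝ (Fin n)) 1,
          T.R ↑v (J ↑v) ↑v (J ↑v) ∂((volume : Measure (EuclideanSpace ℝ (Fin n))).toSphere))
        * Stage4.Jr (n + 3) := by
  haveI : Nontrivial (EuclideanSpace ℝ (Fin n)) :=
    Module.nontrivial_of_finrank_pos (R := ℝ) (by rw [finrank_euclideanSpace_fin]; exact hn)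
  set E := EuclideanSpace ℝ (Fin n)
  set g : EuclideanSpace ℝ (Fin n) → ℝ :=
    fun x => Real.exp (-‖x‖^2) * T.R x (J x) x (J x) with hg
  set g' : Metric.sphere (0 : EuclideanSpace ℝ (Fin n)) 1 × Ioi (0:ℝ) → ℝ :=
    fun p => T.R ↑p.1 (J ↑p.1) ↑p.1 (J ↑p.1) * ((p.2 : ℝ)^4 * Real.exp (-(p.2:ℝ)^2)) with hg'
  have hdim : Module.finrank ℝ (EuclideanSpace ℝ (Fin n)) = n := finrank_euclideanSpace_fin
  calc (∫ x : EuclideanSpace ℝ (Fin n), g x)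
      = ∫ x : ({0}ᶜ : Set (EuclideanSpace ℝ (Fin n))), g ↑x
          ∂((volume : Measure (EuclideanSpace ℝ (Fin n))).comap Subtype.val) := by
        rw [integral_subtype_comap (measurableSet_singleton 0).compl,
          MeasureTheory.restrict_compl_singleton]
    _ = ∫ x : ({0}ᶜ : Set (EuclideanSpace ℝ (Fin n))),
          g' (homeomorphUnitSphereProd (EuclideanSpace ℝ (Fin n)) x)
          ∂((volume : Measure (EuclideanSpace ℝ (Fin n))).comap Subtype.val) := by
        congr 1
        funext x
        have hx0 : (x : EuclideanSpace ℝ (Fin n)) ≠ 0 := x.2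
        have hnorm : ‖(x : EuclideanSpace ℝ (Fin n))‖ ≠ 0 := norm_ne_zero_iff.mpr hx0
        simp only [hg, hg', homeomorphUnitSphereProd_apply_fst_coe,
          homeomorphUnitSphereProd_apply_snd_coe]
        rw [hom4 T]
        rw [inv_pow]
        field_simp
    _ = ∫ p : Metric.sphere (0 : EuclideanSpace ℝ (Fin n)) 1 × Ioi (0:ℝ), g' p
          ∂(((volume : Measure (EuclideanSpace ℝ (Fin n))).toSphere).prod
            (Measure.volumeIoiPow (Module.finrank ℝ (EuclideanSpace ℝ (Fin n)) - 1))) :=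
        (volume : Measure (EuclideanSpace ℝ (Fin n))).measurePreserving_homeomorphUnitSphereProd.integral_comp
          (Homeomorph.measurableEmbedding _) g'
    _ = (∫ v : Metric.sphere (0 : EuclideanSpace ℝ (Fin n)) 1,
          T.R ↑v (J ↑v) ↑v (J ↑v) ∂((volume : Measure (EuclideanSpace ℝ (Fin n))).toSphere))
        * Stage4.Jr (n + 3) := by
        rw [hdim, integral_prod_mul
          (f := fun v : Metric.sphere (0 : EuclideanSpace ℝ (Fin n)) 1 =>
            T.R ↑v (J ↑v) ↑v (J ↑v))
          (g := fun r : Ioi (0:ℝ) => (r : ℝ)^4 * Real.exp (-(r:ℝ)^2)),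
          radial hn]

lemma gaussNorm (hn : 0 < n) :
    (∫ x : EuclideanSpace ℝ (Fin n), Real.exp (-‖x‖^2))
      = (((volume : Measure (EuclideanSpace ℝ (Fin n))).toSphere Set.univ).toReal)
        * Stage4.Jr (n - 1) := by
  haveI : Nontrivial (EuclideanSpace ℝ (Fin n)) :=
    Module.nontrivial_of_finrank_pos (R := ℝ) (by rw [finrank_euclideanSpace_fin]; exact hn)
  have hdim : Module.finrank ℝ (EuclideanSpace ℝ (Fin n)) = n := finrank_euclideanSpace_fin
  have h1 := integral_fun_norm_addHaar (volume : Measure (EuclideanSpace ℝ (Fin n)))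
    (fun t : ℝ => Real.exp (-t^2))
  rw [hdim] at h1
  have hball : ((volume : Measure (EuclideanSpace ℝ (Fin n))) (Metric.ball 0 1)) ≠ ⊤ :=
    measure_ball_lt_top.ne
  rw [h1, Measure.toSphere_apply_univ, hdim]
  rw [ENNReal.toReal_mul, ENNReal.toReal_natCast, ← measureReal_def]
  rw [Stage4.Jr]
  simp only [nsmul_eq_mul, smul_eq_mul]
  rw [show (∫ y in Ioi (0:ℝ), y ^ (n-1) * Real.exp (-y^2))
      = ∫ y in Ioi (0:ℝ), y ^ (n-1) • Real.exp (-y^2) from by simp [smul_eq_mul]]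
  ring

end Stage7

/-- For any algebraic curvature tensor on `ℝ^{2N}` with an orthogonal
complex structure `J`, `∫_{S^{2N-1}} H dσ = ((3s* + s)/(4N(N+1))) · Vol(S^{2N-1})`. -/
theorem integral_holSectCurv_almostHermitian (N : ℕ) (hN : 1 ≤ N)
    (J : EuclideanSpace ℝ (Fin (2 * N)) →ₗ[ℝ] EuclideanSpace ℝ (Fin (2 * N)))
    (hJ : IsOrthCplxStructure J)
    (T : AlgCurvatureTensor (EuclideanSpace ℝ (Fin (2 * N)))) :
    (∫ v : Metric.sphere (0 : EuclideanSpace ℝ (Fin (2 * N))) 1,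
        T.R ↑v (J ↑v) ↑v (J ↑v) ∂(sphereMeasure (2 * N)))
      = ((3 * starScalarCurv T J + scalarCurv T) / (4 * (N : ℝ) * ((N : ℝ) + 1))) *
        ((sphereMeasure (2 * N)) Set.univ).toReal := by
  
  have hn : 0 < 2 * N := by omega
  simp only [sphereMeasure]
  set S := ∫ v : Metric.sphere (0 : EuclideanSpace ℝ (Fin (2 * N))) 1,
      T.R ↑v (J ↑v) ↑v (J ↑v)
      ∂((volume : Measure (EuclideanSpace ℝ (Fin (2 * N)))).toSphere) with hS
  set σr := (((volume : Measure (EuclideanSpace ℝ (Fin (2 * N)))).toSphere Set.univ).toReal)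
    with hσr
  set c := 3 * starScalarCurv T J + scalarCurv T with hc
  set a := Stage4.Jr (2 * N - 1) with ha
  have hapos : 0 < a := Stage4.Jr_pos _
  have key : S * Stage4.Jr (2 * N + 3) = (Stage4.I1d 0 ^ (2*N) / 4) * c := by
    rw [← Stage7.polarH T hn, Stage6.gaussH T hJ]
  have hratio : Stage4.Jr (2 * N + 3) = ((N:ℝ) * ((N:ℝ)+1)) * a := Stage4.Jr_ratio N hN
  have hnorm : σr * a = Stage4.I1d 0 ^ (2*N) := by
    rw [hσr, ha, ← Stage7.gaussNorm hn, Stage6.gaussTotal]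
  have h5 : (S * ((N:ℝ) * ((N:ℝ)+1))) * a = (σr * c / 4) * a := by
    calc (S * ((N:ℝ) * ((N:ℝ)+1))) * a = S * (((N:ℝ) * ((N:ℝ)+1)) * a) := by ring
      _ = (Stage4.I1d 0 ^ (2*N) / 4) * c := by rw [← hratio, key]
      _ = ((σr * a) / 4) * c := by rw [hnorm]
      _ = (σr * c / 4) * a := by ring
  have h6 : S * ((N:ℝ) * ((N:ℝ)+1)) = σr * c / 4 := mul_right_cancel₀ (ne_of_gt hapos) h5
  have hNN : (4 : ℝ) * (N:ℝ) * ((N:ℝ)+1) ≠ 0 := by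
    have : (0:ℝ) < (N:ℝ) := by exact_mod_cast hN
    positivity
  rw [div_mul_eq_mul_div, eq_div_iff hNN]
  calc S * (4 * (N:ℝ) * ((N:ℝ)+1)) = 4 * (S * ((N:ℝ) * ((N:ℝ)+1))) := by ring
    _ = 4 * (σr * c / 4) := by rw [h6]
    _ = c * σr := by ring
end
end

section
/- Let V = ℝ^{2N} (N ≥ 1) with its Euclidean inner product, J an orthogonal complex structure on V, and R an algebraic curvature tensor on V with the Kähler symmetry with respect to J. If H(v) ≤ s/(N(N+1)) for every unit vector v ∈ V (or alternatively H(v) ≥ s/(N(N+1)) for every unit vector v), then H(v) = s/(N(N+1)) for every unit vector v ∈ V. -/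
open MeasureTheory RealInnerProductSpace

noncomputable section

section partA
namespace HSC

variable {E : Type*} [NormedAddCommGroup E] [InnerProductSpace ℝ E]
variable (T : AlgCurvatureTensor E) (J : E →ₗ[ℝ] E)

def B (x y : E) : ℝ := T.R x (J x) y (J y)

def H (x : E) : ℝ := T.R x (J x) x (J x)

lemma neg_fst (x y z w : E) : T.R (-x) y z w = - T.R x y z w := by
  simpa using T.smul_fst (-1) x y z w
lemma neg_snd (x y z w : E) : T.R x (-y) z w = - T.R x y z w := by
  simpa using T.smul_snd (-1) x y z w
lemma neg_trd (x y z w : E) : T.R x y (-z) w = - T.R x y z w := by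
  simpa using T.smul_trd (-1) x y z w
lemma neg_fth (x y z w : E) : T.R x y z (-w) = - T.R x y z w := by
  simpa using T.smul_fth (-1) x y z w

lemma zero_fst (y z w : E) : T.R 0 y z w = 0 := by
  simpa using T.smul_fst 0 0 y z w

lemma B_symm (x y : E) : B T J x y = B T J y x := T.pair_symm _ _ _ _

omit J in
lemma G_symm (x y : E) : T.R y x y x = T.R x y x y := by
  have e1 := T.antisymm₁₂ y x y x
  have e2 := T.antisymm₃₄ x y y x
  have e3 := T.pair_symm x y y x
  have e4 := T.antisymm₁₂ y x x y
  linarith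

variable {T J}

section kaehler
variable (hJ : ∀ x, J (J x) = -x) (hK : T.IsKaehler J)

include hK in
lemma k2 (x y z w : E) : T.R x y (J z) (J w) = T.R x y z w := by
  rw [T.pair_symm, hK, T.pair_symm]

include hJ hK in
lemma moveJ (x y z w : E) : T.R (J x) y z w = - T.R x (J y) z w := by
  have h := hK x (J y) z w
  rw [hJ y] at h
  rw [neg_snd] at h
  linarith

include hJ in
lemma B_Jsnd (x y : E) : B T J x (J y) = B T J x y := by
  simp only [B]
  rw [hJ y]
  have e1 := T.antisymm₃₄ x (J x) (J y) (-y)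
  have e2 := neg_fth T x (J x) (J y) y
  have e3 := T.antisymm₃₄ x (J x) y (J y)
  linarith

include hJ in
lemma B_Jfst (x y : E) : B T J (J x) y = B T J x y := by
  rw [B_symm, B_Jsnd hJ, B_symm]

lemma B_negfst (x y : E) : B T J (-x) y = B T J x y := by
  simp only [B, map_neg]
  rw [neg_fst, neg_snd]; ring

lemma B_negsnd (x y : E) : B T J x (-y) = B T J x y := by
  rw [B_symm, B_negfst, B_symm]

include hJ hK in
lemma gstar (x y : E) : T.R x (J y) x (J y) = B T J x y - T.R x y x y := by
  simp only [B]
  have e1 := T.bianchi y (J y) (J x) x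
  have e2 := T.antisymm₃₄ y (J y) (J x) x
  have e3 := T.pair_symm y (J y) x (J x)
  have e4 := hK y x y x
  have e5 := G_symm T x y
  have e6 := moveJ hJ hK x y (J y) x
  have e7 := T.antisymm₃₄ x (J y) (J y) x
  linarith

include hJ hK in
lemma gstar' (x y : E) : T.R y (J x) y (J x) = B T J x y - T.R x y x y := by
  have h := gstar hJ hK y x
  rw [B_symm] at h
  have e5 := G_symm T x y
  linarith

include hK in
lemma mixed (x y : E) : T.R x (J y) y (J x) = B T J x y - T.R x y x y := by
  simp only [B]
  have hb := T.bianchi x (J y) y (J x)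
  have h1 := T.pair_symm (J y) y x (J x)
  have h2 := T.antisymm₃₄ x (J x) y (J y)
  have h3 := k2 hK y x y x
  have h4 := G_symm T x y
  linarith

include hJ in
lemma H_J (u : E) : H (T := T) J (J u) = H (T := T) J u := by
  simp only [H]
  rw [hJ u]
  have e1 := neg_snd T (J u) u (J u) (-u)
  have e2 := neg_fth T (J u) u (J u) u
  have e3 := T.antisymm₁₂ u (J u) (J u) u
  have e4 := T.antisymm₃₄ u (J u) u (J u)
  have e5 := T.pair_symm (J u) u u (J u)
  have e6 := T.antisymm₁₂ u (J u) u (J u)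
  linarith

lemma H_neg (u : E) : H (T := T) J (-u) = H (T := T) J u := by
  simp only [H, map_neg]
  rw [neg_fst, neg_snd, neg_trd, neg_fth]; ring

end kaehler
end HSC
end partA
section partB
namespace HSC
variable {E : Type*} [NormedAddCommGroup E] [InnerProductSpace ℝ E]
variable {T : AlgCurvatureTensor E} {J : E →ₗ[ℝ] E}
variable (hJ : ∀ x, J (J x) = -x) (hK : T.IsKaehler J)

lemma exp2 (x w : E) :
    H (T := T) J (x + w) + H (T := T) J (x + -w) =
      2 * H (T := T) J x + 2 * H (T := T) J w + 4 * B T J x w +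
      2 * T.R w (J x) w (J x) + 2 * T.R x (J w) x (J w) + 4 * T.R x (J w) w (J x) := by
  simp only [H, B, map_add, map_neg, T.add_fst, T.add_snd, T.add_trd, T.add_fth,
    neg_fst, neg_snd, neg_trd, neg_fth]
  have p1 := T.pair_symm w (J w) x (J x)
  have p2 := T.pair_symm w (J x) x (J w)
  linarith

include hJ hK in
lemma sumfour_H (z u : E) :
    H (T := T) J (z + u) + H (T := T) J (z + J u) + H (T := T) J (z + -u)
      + H (T := T) J (z + -J u) =
      4 * H (T := T) J z + 4 * H (T := T) J u + 16 * B T J z u := by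
  have A := exp2 (T := T) (J := J) z u
  have A2 := exp2 (T := T) (J := J) z (J u)
  rw [H_J hJ, B_Jsnd hJ] at A2
  -- rewrite the three extra terms of A2
  have t1 : T.R (J u) (J z) (J u) (J z) = T.R z u z u := by
    have h1 := hK u z (J u) (J z)
    have h2 := k2 hK u z u z
    have h3 := G_symm T z u
    linarith
  have t2 : T.R z (J (J u)) z (J (J u)) = T.R z u z u := by
    rw [hJ u, neg_snd, neg_fth]; ring
  have t3 : T.R z (J (J u)) (J u) (J z) = T.R z u z u := by
    rw [hJ u, neg_snd]
    have h1 := k2 hK z u u z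
    have h2 := T.antisymm₃₄ z u z u
    linarith
  rw [t1, t2, t3] at A2
  -- rewrite terms of A via gstar/mixed
  have g1 := gstar' hJ hK z u   -- R(u,Jz,u,Jz) = B z u - R z u z u
  have g2 := gstar hJ hK z u    -- R(z,Ju,z,Ju) = B z u - R z u z u
  have g3 := mixed hK z u       -- R(z,Ju,u,Jz) = B z u - R z u z u
  have hg : T.R u (J z) u (J z) = B T J z u - T.R z u z u := by
    have h3 := G_symm T z u
    have hb := B_symm T J z u
    linarith
  linarith

include hJ hK in
lemma sumfour_B (z u y : E) :
    B T J (z + u) y + B T J (z + J u) y + B T J (z + -u) y + B T J (z + -J u) y =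
      4 * B T J z y + 4 * B T J u y := by
  have hjf := B_Jfst (T := T) hJ u y
  simp only [B, map_add, map_neg, T.add_fst, T.add_snd, T.add_trd, T.add_fth,
    neg_fst, neg_snd, neg_trd, neg_fth] at *
  have h1 := hK u z y (J y)
  linarith

/-- the four "phases" `x, Jx, -x, -Jx` -/
def sgn (J : E →ₗ[ℝ] E) : Fin 4 → E → E := fun m x =>
  match m with
  | 0 => x
  | 1 => J x
  | 2 => -x
  | 3 => -(J x)

include hJ hK in
lemma sum_sgn_H (z u : E) :
    ∑ m : Fin 4, H (T := T) J (z + sgn J m u) =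
      4 * H (T := T) J z + 4 * H (T := T) J u + 16 * B T J z u := by
  rw [Fin.sum_univ_four]
  exact sumfour_H hJ hK z u

include hJ hK in
lemma sum_sgn_B (z u y : E) :
    ∑ m : Fin 4, B T J (z + sgn J m u) y = 4 * B T J z y + 4 * B T J u y := by
  rw [Fin.sum_univ_four]
  exact sumfour_B hJ hK z u y

end HSC
end partB
section partC
namespace HSC
variable {E : Type*} [NormedAddCommGroup E] [InnerProductSpace ℝ E]
variable {T : AlgCurvatureTensor E} {J : E →ₗ[ℝ] E}
variable (hJ : ∀ x, J (J x) = -x) (hK : T.IsKaehler J)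

/-- mixed phase vector `∑ i, φ_{k i} (u i)` -/
def mix (J : E →ₗ[ℝ] E) {n : ℕ} (u : Fin n → E) (k : Fin n → Fin 4) : E :=
  ∑ i, sgn J (k i) (u i)

lemma mix_cons {n : ℕ} (u : Fin (n + 1) → E) (m : Fin 4) (k : Fin n → Fin 4) :
    mix J u (Fin.cons m k) = mix J (u ∘ Fin.succ) k + sgn J m (u 0) := by
  simp [mix, Fin.sum_univ_succ, add_comm]

lemma sum_fn_split {n : ℕ} (F : (Fin (n + 1) → Fin 4) → ℝ) :
    ∑ k : Fin (n + 1) → Fin 4, F k =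
      ∑ k' : Fin n → Fin 4, ∑ m : Fin 4, F (Fin.cons m k') := by
  calc ∑ k : Fin (n + 1) → Fin 4, F k
      = ∑ p : Fin 4 × (Fin n → Fin 4), F (Fin.cons p.1 p.2) :=
        Fintype.sum_equiv (Fin.consEquiv fun _ => Fin 4).symm _ _
          (fun k => congrArg F (Fin.cons_self_tail k).symm)
    _ = ∑ k' : Fin n → Fin 4, ∑ m : Fin 4, F (Fin.cons m k') := Fintype.sum_prod_type_right (f := fun p => F (Fin.cons p.1 p.2))

include hJ hK in
lemma sum_mix_B : ∀ {n : ℕ} (u : Fin n → E) (y : E),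
    ∑ k : Fin n → Fin 4, B T J (mix J u k) y = 4 ^ n * ∑ i, B T J (u i) y := by
  intro n
  induction n with
  | zero =>
      intro u y
      simp [mix, B, map_zero, zero_fst]
  | succ n ih =>
      intro u y
      rw [sum_fn_split]
      have hstep : ∀ k' : Fin n → Fin 4,
          ∑ m : Fin 4, B T J (mix J u (Fin.cons m k')) y =
            4 * B T J (mix J (u ∘ Fin.succ) k') y + 4 * B T J (u 0) y := by
        intro k'
        have := sum_sgn_B hJ hK (mix J (u ∘ Fin.succ) k') (u 0) y
        rw [← this]
        exact Finset.sum_congr rfl fun m _ => by rw [mix_cons]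
      rw [Finset.sum_congr rfl fun k' _ => hstep k']
      rw [Finset.sum_add_distrib, Finset.sum_const, ← Finset.mul_sum, ih]
      simp only [Finset.card_univ, Fintype.card_fun, Fintype.card_fin, nsmul_eq_mul]
      rw [Fin.sum_univ_succ]
      push_cast
      ring_nf
      simp [Function.comp]
      ring

include hJ hK in
lemma sum_mix_H : ∀ {n : ℕ} (u : Fin n → E),
    ∑ k : Fin n → Fin 4, H (T := T) J (mix J u k) =
      4 ^ n * (2 * ∑ i, ∑ j, B T J (u i) (u j) - ∑ i, H (T := T) J (u i)) := by
  intro n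
  induction n with
  | zero =>
      intro u
      simp [mix, H, map_zero, zero_fst]
  | succ n ih =>
      intro u
      rw [sum_fn_split]
      have hstep : ∀ k' : Fin n → Fin 4,
          ∑ m : Fin 4, H (T := T) J (mix J u (Fin.cons m k')) =
            4 * H (T := T) J (mix J (u ∘ Fin.succ) k') + 4 * H (T := T) J (u 0)
              + 16 * B T J (mix J (u ∘ Fin.succ) k') (u 0) := by
        intro k'
        have := sum_sgn_H hJ hK (mix J (u ∘ Fin.succ) k') (u 0)
        rw [← this]
        exact Finset.sum_congr rfl fun m _ => by rw [mix_cons]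
      rw [Finset.sum_congr rfl fun k' _ => hstep k']
      rw [Finset.sum_add_distrib, Finset.sum_add_distrib, Finset.sum_const,
        ← Finset.mul_sum, ← Finset.mul_sum, ih, sum_mix_B hJ hK]
      simp only [Finset.card_univ, Fintype.card_fun, Fintype.card_fin, nsmul_eq_mul]
      have hBrow : ∀ j : Fin n, B T J (u 0) (u (Fin.succ j)) = B T J (u (Fin.succ j)) (u 0) :=
        fun j => B_symm T J _ _
      have hB00 : B T J (u 0) (u 0) = H (T := T) J (u 0) := rfl
      simp only [Fin.sum_univ_succ, hB00, Finset.sum_add_distrib]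
      rw [Finset.sum_congr rfl fun j _ => hBrow j]
      push_cast
      simp only [Function.comp]
      ring
end HSC
end partC
section partD
namespace HSC
variable {E : Type*} [NormedAddCommGroup E] [InnerProductSpace ℝ E]

/-- a diagonal sum of a bilinear form over an orthonormal basis is basis independent -/
lemma diag_sum_eq {ι κ : Type*} [Fintype ι] [Fintype κ]
    (φ : E →ₗ[ℝ] E →ₗ[ℝ] ℝ) (b : OrthonormalBasis ι ℝ E) (c : OrthonormalBasis κ ℝ E) :
    ∑ i, φ (b i) (b i) = ∑ j, φ (c j) (c j) := by
  classical
  have hrepr : ∀ x : E, x = ∑ j, (inner ℝ (c j) x : ℝ) • c j := by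
    intro x
    conv_lhs => rw [← c.sum_repr x]
    exact Finset.sum_congr rfl fun j _ => by rw [c.repr_apply_apply]
  have hexp : ∀ x y : E,
      φ x y = ∑ j, ∑ k, (inner ℝ (c j) x : ℝ) * ((inner ℝ (c k) y : ℝ) * φ (c j) (c k)) := by
    intro x y
    conv_lhs => rw [hrepr x, hrepr y]
    simp only [map_sum, _root_.map_smul, LinearMap.sum_apply, LinearMap.smul_apply,
      LinearMap.map_smul, smul_eq_mul, Finset.mul_sum]
    rw [Finset.sum_comm]
    exact Finset.sum_congr rfl fun j _ => Finset.sum_congr rfl fun k _ => by ring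
  calc ∑ i, φ (b i) (b i)
      = ∑ i, ∑ j, ∑ k, (inner ℝ (c j) (b i) : ℝ) * ((inner ℝ (c k) (b i) : ℝ) * φ (c j) (c k)) :=
        Finset.sum_congr rfl fun i _ => hexp (b i) (b i)
    _ = ∑ j, ∑ k, (∑ i, (inner ℝ (c j) (b i) : ℝ) * (inner ℝ (b i) (c k) : ℝ)) * φ (c j) (c k) := by
        rw [Finset.sum_comm]
        refine Finset.sum_congr rfl fun j _ => ?_
        rw [Finset.sum_comm]
        refine Finset.sum_congr rfl fun k _ => ?_
        rw [Finset.sum_mul]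
        refine Finset.sum_congr rfl fun i _ => ?_
        rw [real_inner_comm (b i) (c k)]
        ring
    _ = ∑ j, ∑ k, (inner ℝ (c j) (c k) : ℝ) * φ (c j) (c k) := by
        refine Finset.sum_congr rfl fun j _ => Finset.sum_congr rfl fun k _ => ?_
        rw [b.sum_inner_mul_inner]
    _ = ∑ j, φ (c j) (c j) := by
        refine Finset.sum_congr rfl fun j _ => ?_
        rw [Finset.sum_eq_single j]
        · rw [real_inner_self_eq_norm_sq, c.orthonormal.1 j]; norm_num
        · intro k _ hk
          rw [c.orthonormal.2 (Ne.symm hk)]; ring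
        · intro h; exact absurd (Finset.mem_univ j) h
end HSC
end partD
section partD2
namespace HSC

variable {n : ℕ}

/-- bilinear map `(x, z) ↦ ∑ₐ R(x, eₐ, z, eₐ)` -/
def ricMap (T : AlgCurvatureTensor (EuclideanSpace ℝ (Fin n))) :
    EuclideanSpace ℝ (Fin n) →ₗ[ℝ] EuclideanSpace ℝ (Fin n) →ₗ[ℝ] ℝ :=
  LinearMap.mk₂ ℝ (fun x z => ∑ a, T.R x (stdBasis n a) z (stdBasis n a))
    (fun x x' z => by simp [T.add_fst, Finset.sum_add_distrib])
    (fun r x z => by simp [T.smul_fst, Finset.mul_sum])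
    (fun x z z' => by simp [T.add_trd, Finset.sum_add_distrib])
    (fun r x z => by simp [T.smul_trd, Finset.mul_sum])

/-- bilinear map `(y, w) ↦ R(x, y, z, w)` -/
def inMap (T : AlgCurvatureTensor (EuclideanSpace ℝ (Fin n)))
    (x z : EuclideanSpace ℝ (Fin n)) :
    EuclideanSpace ℝ (Fin n) →ₗ[ℝ] EuclideanSpace ℝ (Fin n) →ₗ[ℝ] ℝ :=
  LinearMap.mk₂ ℝ (fun y w => T.R x y z w)
    (fun y y' w => by simp [T.add_snd])
    (fun r y w => by simp [T.smul_snd])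
    (fun y w w' => by simp [T.add_fth])
    (fun r y w => by simp [T.smul_fth])

variable {N : ℕ} {J : EuclideanSpace ℝ (Fin (2 * N)) →ₗ[ℝ] EuclideanSpace ℝ (Fin (2 * N))}
  {T : AlgCurvatureTensor (EuclideanSpace ℝ (Fin (2 * N)))}

/-- the orthonormal basis coming from a unitary frame -/
lemma scalarCurv_eq_frame (hN : 1 ≤ N)
    (hJ : ∀ x, J (J x) = -x) (hK : T.IsKaehler J)
    (u : Fin N → EuclideanSpace ℝ (Fin (2 * N)))
    (hon : Orthonormal ℝ (Sum.elim u (fun i => J (u i)))) :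
    scalarCurv T = 2 * ∑ α, ∑ β, B T J (u α) (u β) := by
  classical
  haveI : Nonempty (Fin N ⊕ Fin N) := ⟨Sum.inl ⟨0, hN⟩⟩
  have hcard : Fintype.card (Fin N ⊕ Fin N) = Module.finrank ℝ (EuclideanSpace ℝ (Fin (2 * N))) := by
    simp [finrank_euclideanSpace_fin]; ring
  set g : Fin N ⊕ Fin N → EuclideanSpace ℝ (Fin (2 * N)) := Sum.elim u (fun i => J (u i)) with hg
  have hb := basisOfOrthonormalOfCardEqFinrank hon hcard
  have hcoe : ⇑(basisOfOrthonormalOfCardEqFinrank hon hcard) = g :=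
    coe_basisOfOrthonormalOfCardEqFinrank hon hcard
  have hong : Orthonormal ℝ ⇑(basisOfOrthonormalOfCardEqFinrank hon hcard) := by rwa [hcoe]
  set f : OrthonormalBasis (Fin N ⊕ Fin N) ℝ (EuclideanSpace ℝ (Fin (2 * N))) :=
    (basisOfOrthonormalOfCardEqFinrank hon hcard).toOrthonormalBasis hong with hfdef
  have hf : ∀ p, f p = g p := by
    intro p
    rw [hfdef]
    rw [show ⇑((basisOfOrthonormalOfCardEqFinrank hon hcard).toOrthonormalBasis hong)
        = ⇑(basisOfOrthonormalOfCardEqFinrank hon hcard) from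
      Module.Basis.coe_toOrthonormalBasis _ _, hcoe]
  set e : OrthonormalBasis (Fin (2 * N)) ℝ (EuclideanSpace ℝ (Fin (2 * N))) :=
    EuclideanSpace.basisFun (Fin (2 * N)) ℝ with hedef
  have he : ∀ a, e a = stdBasis (2 * N) a := fun a => by
    rw [hedef, EuclideanSpace.basisFun_apply]; rfl
  -- step 1
  have step1 : scalarCurv T = ∑ p, ∑ a, T.R (f p) (stdBasis (2 * N) a) (f p) (stdBasis (2 * N) a) := by
    have h1 : scalarCurv T = ∑ i, (ricMap T) (e i) (e i) := by
      refine Finset.sum_congr rfl fun i _ => ?_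
      rw [he i]; rfl
    rw [h1, diag_sum_eq (ricMap T) e f]
    rfl
  -- step 2
  have step2 : ∀ x, (∑ a, T.R x (stdBasis (2 * N) a) x (stdBasis (2 * N) a))
      = ∑ q, T.R x (f q) x (f q) := by
    intro x
    have h1 : ∑ a, T.R x (stdBasis (2 * N) a) x (stdBasis (2 * N) a)
        = ∑ a, (inMap T x x) (e a) (e a) := by
      refine Finset.sum_congr rfl fun a _ => ?_
      rw [he a]; rfl
    rw [h1, diag_sum_eq (inMap T x x) e f]
    rfl
  -- step 3
  have step3 : ∀ x, (∑ q, T.R x (f q) x (f q)) = ∑ α, B T J x (u α) := by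
    intro x
    have : ∀ q, T.R x (f q) x (f q) = T.R x (g q) x (g q) := fun q => by rw [hf]
    rw [Finset.sum_congr rfl fun q _ => this q]
    rw [Fintype.sum_sum_type]
    simp only [hg, Sum.elim_inl, Sum.elim_inr]
    rw [← Finset.sum_add_distrib]
    refine Finset.sum_congr rfl fun α _ => ?_
    have := gstar hJ hK x (u α)
    linarith
  -- assemble
  rw [step1]
  rw [Finset.sum_congr rfl fun p _ => step2 (f p)]
  rw [Finset.sum_congr rfl fun p _ => step3 (f p)]
  have hcast : (∑ p : Fin N ⊕ Fin N, ∑ α, B T J (f p) (u α))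
      = ∑ p : Fin N ⊕ Fin N, ∑ α, B T J (g p) (u α) :=
    Finset.sum_congr rfl fun p _ => Finset.sum_congr rfl fun α _ => by rw [hf p]
  rw [hcast, Fintype.sum_sum_type]
  have h4 : (∑ β, ∑ α, B T J (g (Sum.inr β)) (u α)) = ∑ β, ∑ α, B T J (u β) (u α) := by
    refine Finset.sum_congr rfl fun β _ => Finset.sum_congr rfl fun α _ => ?_
    show B T J (J (u β)) (u α) = _
    exact B_Jfst hJ _ _
  rw [h4]
  have h5 : (∑ β, ∑ α, B T J (g (Sum.inl β)) (u α)) = ∑ β, ∑ α, B T J (u β) (u α) := rfl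
  rw [h5]; ring
end HSC
end partD2
section partE
namespace HSC
variable {E : Type*} [NormedAddCommGroup E] [InnerProductSpace ℝ E]
variable {J : E →ₗ[ℝ] E}

section innerJ
variable (hJ : IsOrthCplxStructure J)

include hJ in
lemma inner_J_left (x y : E) : (inner ℝ (J x) y : ℝ) = - (inner ℝ x (J y) : ℝ) := by
  have h := hJ.2 (J x) y
  rw [hJ.1 x] at h
  rw [← h, inner_neg_left]

include hJ in
lemma inner_J_self (x : E) : (inner ℝ x (J x) : ℝ) = 0 := by
  have h := inner_J_left hJ x x
  have h2 := real_inner_comm x (J x)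
  linarith

include hJ in
lemma orthonormal_of_Q {n : ℕ} {u : Fin n → E}
    (h1 : ∀ i j, (inner ℝ (u i) (u j) : ℝ) = if i = j then 1 else 0)
    (h2 : ∀ i j, (inner ℝ (u i) (J (u j)) : ℝ) = 0) :
    Orthonormal ℝ (Sum.elim u (fun i => J (u i))) := by
  rw [orthonormal_iff_ite]
  intro p q
  rcases p with i | i <;> rcases q with j | j
  · simpa using h1 i j
  · simpa using h2 i j
  · have := inner_J_left hJ (u i) (u j)
    simp [this, h2 i j]
  · have := hJ.2 (u i) (u j)
    simp only [Sum.elim_inr, this]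
    simpa using h1 i j
end innerJ

variable {N : ℕ}

lemma exists_frame (hN : 1 ≤ N)
    {J : EuclideanSpace ℝ (Fin (2 * N)) →ₗ[ℝ] EuclideanSpace ℝ (Fin (2 * N))}
    (hJ : IsOrthCplxStructure J) (v : EuclideanSpace ℝ (Fin (2 * N))) (hv : ‖v‖ = 1) :
    ∃ u : Fin N → EuclideanSpace ℝ (Fin (2 * N)),
      (∀ i j, (inner ℝ (u i) (u j) : ℝ) = if i = j then 1 else 0) ∧
      (∀ i j, (inner ℝ (u i) (J (u j)) : ℝ) = 0) ∧
      ∃ i₀, u i₀ = v := by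
  classical
  have hvv : (inner ℝ v v : ℝ) = 1 := by
    rw [real_inner_self_eq_norm_sq, hv]; norm_num
  obtain ⟨M, rfl⟩ : ∃ M, N = M + 1 := ⟨N - 1, by omega⟩
  have key : ∀ k : ℕ, k + 1 ≤ M + 1 →
      ∃ u : Fin (k + 1) → EuclideanSpace ℝ (Fin (2 * (M + 1))), u 0 = v ∧
      (∀ i j, (inner ℝ (u i) (u j) : ℝ) = if i = j then 1 else 0) ∧
      (∀ i j, (inner ℝ (u i) (J (u j)) : ℝ) = 0) := by
    intro k
    induction k with
    | zero =>
        intro _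
        refine ⟨fun _ => v, rfl, fun i j => ?_, fun i j => ?_⟩
        · have hij : i = j := Fin.ext (by omega)
          rw [hij, if_pos rfl]; exact hvv
        · exact inner_J_self hJ v
    | succ k ih =>
        intro hk2
        obtain ⟨u, h0, h1, h2⟩ := ih (by omega)
        set g : Fin (k + 1) ⊕ Fin (k + 1) → EuclideanSpace ℝ (Fin (2 * (M + 1))) :=
          Sum.elim u (fun i => J (u i)) with hg
        set S : Submodule ℝ (EuclideanSpace ℝ (Fin (2 * (M + 1)))) :=
          Submodule.span ℝ (Set.range g) with hS
        have hcard : Fintype.card (Fin (k + 1) ⊕ Fin (k + 1)) = 2 * (k + 1) := by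
          simp [Fintype.card_sum]; omega
        have hrank : Module.finrank ℝ S ≤ 2 * (k + 1) := by
          have h := finrank_range_le_card (R := ℝ) g
          rw [Set.finrank, hcard] at h
          exact h
        have hStop : S ≠ ⊤ := by
          intro htop
          rw [htop, finrank_top, finrank_euclideanSpace_fin] at hrank
          omega
        have hbot : Sᗮ ≠ ⊥ := fun h => hStop (Submodule.orthogonal_eq_bot_iff.mp h)
        obtain ⟨w, hwmem, hw0⟩ := (Submodule.ne_bot_iff _).mp hbot
        set z : EuclideanSpace ℝ (Fin (2 * (M + 1))) := (‖w‖⁻¹ : ℝ) • w with hz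
        have hznorm : ‖z‖ = 1 := norm_smul_inv_norm hw0
        have hzz : (inner ℝ z z : ℝ) = 1 := by
          rw [real_inner_self_eq_norm_sq, hznorm]; norm_num
        have hzmem : z ∈ Sᗮ := Submodule.smul_mem _ _ hwmem
        have hzS : ∀ x ∈ S, (inner ℝ x z : ℝ) = 0 := fun x hx =>
          (Submodule.mem_orthogonal S z).mp hzmem x hx
        have humem : ∀ i, u i ∈ S := fun i => Submodule.subset_span ⟨Sum.inl i, rfl⟩
        have hJumem : ∀ i, J (u i) ∈ S := fun i => Submodule.subset_span ⟨Sum.inr i, rfl⟩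
        refine ⟨Fin.snoc u z, ?_, fun i j => ?_, fun i j => ?_⟩
        · rw [show (0 : Fin (k + 2)) = Fin.castSucc 0 by simp, Fin.snoc_castSucc, h0]
        · refine Fin.lastCases ?_ (fun i' => ?_) i
          · refine Fin.lastCases ?_ (fun j' => ?_) j
            · simp [Fin.snoc_last, hzz, hznorm]
            · have hne : Fin.last (k + 1) ≠ Fin.castSucc j' := (Fin.castSucc_lt_last j').ne'
              rw [Fin.snoc_last, Fin.snoc_castSucc, if_neg hne,
                real_inner_comm, hzS _ (humem j')]
          · refine Fin.lastCases ?_ (fun j' => ?_) j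
            · have hne : Fin.castSucc i' ≠ Fin.last (k + 1) := (Fin.castSucc_lt_last i').ne
              rw [Fin.snoc_last, Fin.snoc_castSucc, if_neg hne, hzS _ (humem i')]
            · rw [Fin.snoc_castSucc, Fin.snoc_castSucc, h1 i' j']
              simp [Fin.castSucc_inj]
        · refine Fin.lastCases ?_ (fun i' => ?_) i
          · refine Fin.lastCases ?_ (fun j' => ?_) j
            · rw [Fin.snoc_last]
              exact inner_J_self hJ z
            · rw [Fin.snoc_last, Fin.snoc_castSucc, real_inner_comm]
              exact hzS _ (hJumem j')
          · refine Fin.lastCases ?_ (fun j' => ?_) j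
            · rw [Fin.snoc_last, Fin.snoc_castSucc]
              have h := inner_J_left hJ (u i') z
              have h2 := hzS _ (hJumem i')
              linarith
            · rw [Fin.snoc_castSucc, Fin.snoc_castSucc]
              exact h2 i' j'
  obtain ⟨u, h0, h1, h2⟩ := key M le_rfl
  exact ⟨u, h1, h2, 0, h0⟩
end HSC
end partE
section partF
namespace HSC
variable {E : Type*} [NormedAddCommGroup E] [InnerProductSpace ℝ E]
variable {T : AlgCurvatureTensor E} {J : E →ₗ[ℝ] E}

lemma sgn_inner_self (hJ : IsOrthCplxStructure J) (m : Fin 4) (x : E) :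
    (inner ℝ (sgn J m x) (sgn J m x) : ℝ) = (inner ℝ x x : ℝ) := by
  have hn : ‖J x‖ = ‖x‖ := (pow_left_inj₀ (norm_nonneg _) (norm_nonneg _) two_ne_zero).mp
    (by rw [← real_inner_self_eq_norm_sq, ← real_inner_self_eq_norm_sq, hJ.2])
  fin_cases m <;> simp [sgn, hJ.2 x x, hn]

lemma sgn_inner_zero (hJ : IsOrthCplxStructure J) (m m' : Fin 4) {x y : E}
    (hxy : (inner ℝ x y : ℝ) = 0) (hxJy : (inner ℝ x (J y) : ℝ) = 0) :
    (inner ℝ (sgn J m x) (sgn J m' y) : ℝ) = 0 := by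
  have hJxy : (inner ℝ (J x) y : ℝ) = 0 := by rw [inner_J_left hJ, hxJy, neg_zero]
  have hJxJy : (inner ℝ (J x) (J y) : ℝ) = 0 := by rw [hJ.2, hxy]
  fin_cases m <;> fin_cases m' <;>
    simp [sgn, inner_neg_left, inner_neg_right, hxy, hxJy, hJxy, hJxJy]

lemma mix_inner_self (hJ : IsOrthCplxStructure J) {n : ℕ} {u : Fin n → E}
    (h1 : ∀ i j, (inner ℝ (u i) (u j) : ℝ) = if i = j then 1 else 0)
    (h2 : ∀ i j, (inner ℝ (u i) (J (u j)) : ℝ) = 0) (k : Fin n → Fin 4) :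
    (inner ℝ (mix J u k) (mix J u k) : ℝ) = (n : ℝ) := by
  classical
  have hpair : ∀ i j, (inner ℝ (sgn J (k i) (u i)) (sgn J (k j) (u j)) : ℝ)
      = if i = j then 1 else 0 := by
    intro i j
    by_cases h : i = j
    · subst h
      rw [if_pos rfl, sgn_inner_self hJ]
      have := h1 i i
      rwa [if_pos rfl] at this
    · rw [if_neg h]
      refine sgn_inner_zero hJ _ _ ?_ (h2 i j)
      rw [h1, if_neg h]
  rw [mix, sum_inner]
  have : ∀ i, (inner ℝ (sgn J (k i) (u i)) (∑ j, sgn J (k j) (u j)) : ℝ)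
      = ∑ j, (inner ℝ (sgn J (k i) (u i)) (sgn J (k j) (u j)) : ℝ) := fun i => inner_sum _ _ _
  rw [Finset.sum_congr rfl fun i _ => this i]
  rw [Finset.sum_congr rfl fun i _ => Finset.sum_congr rfl fun j _ => hpair i j]
  simp

lemma H_smul (c : ℝ) (x : E) :
    H (T := T) J (c • x) = c ^ 4 * H (T := T) J x := by
  simp only [H, _root_.map_smul, T.smul_fst, T.smul_snd, T.smul_trd, T.smul_fth]
  ring

lemma H_le_of_unit {c : ℝ} (hb : ∀ v : E, ‖v‖ = 1 → H (T := T) J v ≤ c) (x : E) :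
    H (T := T) J x ≤ c * ‖x‖ ^ 4 := by
  by_cases hx : x = 0
  · subst hx
    have h0 : H (T := T) J (0 : E) = 0 := by
      simp [H, zero_fst]
    rw [h0]
    simp
  · have hw : ‖(‖x‖⁻¹ : ℝ) • x‖ = 1 := norm_smul_inv_norm hx
    have hxw : x = ‖x‖ • ((‖x‖⁻¹ : ℝ) • x) := by
      rw [smul_smul, mul_inv_cancel₀ (norm_ne_zero_iff.mpr hx), one_smul]
    calc H (T := T) J x = ‖x‖ ^ 4 * H (T := T) J ((‖x‖⁻¹ : ℝ) • x) := by
            conv_lhs => rw [hxw]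
            exact H_smul _ _
      _ ≤ ‖x‖ ^ 4 * c := by
            have := hb _ hw
            exact mul_le_mul_of_nonneg_left this (by positivity)
      _ = c * ‖x‖ ^ 4 := by ring

/-- the negation of an algebraic curvature tensor -/
def negT (T : AlgCurvatureTensor E) : AlgCurvatureTensor E where
  R x y z w := - T.R x y z w
  add_fst x x' y z w := by rw [T.add_fst]; ring
  smul_fst c x y z w := by rw [T.smul_fst]; ring
  add_snd x y y' z w := by rw [T.add_snd]; ring
  smul_snd c x y z w := by rw [T.smul_snd]; ring
  add_trd x y z z' w := by rw [T.add_trd]; ring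
  smul_trd c x y z w := by rw [T.smul_trd]; ring
  add_fth x y z w w' := by rw [T.add_fth]; ring
  smul_fth c x y z w := by rw [T.smul_fth]; ring
  antisymm₁₂ x y z w := by have := T.antisymm₁₂ x y z w; linarith
  antisymm₃₄ x y z w := by have := T.antisymm₃₄ x y z w; linarith
  pair_symm x y z w := by have := T.pair_symm x y z w; linarith
  bianchi x y z w := by have := T.bianchi x y z w; linarith

lemma negT_isKaehler (hK : T.IsKaehler J) : (negT T).IsKaehler J := by
  intro x y z w
  show -T.R (J x) (J y) z w = -T.R x y z w
  rw [hK]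

end HSC

lemma scalarCurv_negT {n : ℕ} (T : AlgCurvatureTensor (EuclideanSpace ℝ (Fin n))) :
    scalarCurv (HSC.negT T) = - scalarCurv T := by
  simp [scalarCurv, HSC.negT, Finset.sum_neg_distrib]

namespace HSC

/-- the main lemma : the `≤` pinching case -/
lemma main_le {N : ℕ} (hN : 1 ≤ N)
    {J : EuclideanSpace ℝ (Fin (2 * N)) →ₗ[ℝ] EuclideanSpace ℝ (Fin (2 * N))}
    (hJ : IsOrthCplxStructure J)
    {T : AlgCurvatureTensor (EuclideanSpace ℝ (Fin (2 * N)))}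
    (hK : T.IsKaehler J)
    (hb : ∀ v : EuclideanSpace ℝ (Fin (2 * N)), ‖v‖ = 1 →
        T.R v (J v) v (J v) ≤ scalarCurv T / ((N : ℝ) * ((N : ℝ) + 1))) :
    ∀ v : EuclideanSpace ℝ (Fin (2 * N)), ‖v‖ = 1 →
      T.R v (J v) v (J v) = scalarCurv T / ((N : ℝ) * ((N : ℝ) + 1)) := by
  classical
  intro v hv
  set c : ℝ := scalarCurv T / ((N : ℝ) * ((N : ℝ) + 1)) with hc
  have hN1 : (1 : ℝ) ≤ (N : ℝ) := by exact_mod_cast hN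
  have hcs : (N : ℝ) * ((N : ℝ) + 1) * c = scalarCurv T := by
    rw [hc]
    field_simp
  obtain ⟨u, h1, h2, i₀, hi₀⟩ := exists_frame hN hJ v hv
  have hon := orthonormal_of_Q hJ h1 h2
  have hunit : ∀ i, ‖u i‖ = 1 := by
    intro i
    have h := h1 i i
    rw [if_pos rfl, real_inner_self_eq_norm_sq] at h
    have h' : ‖u i‖ ^ 2 = 1 ^ 2 := by rw [h]; norm_num
    exact (pow_left_inj₀ (norm_nonneg _) zero_le_one two_ne_zero).mp h'
  have hs := scalarCurv_eq_frame hN hJ.1 hK u hon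
  have key : ∑ k : Fin N → Fin 4, H (T := T) J (mix J u k)
      = 4 ^ N * (scalarCurv T - ∑ i, H (T := T) J (u i)) := by
    rw [sum_mix_H hJ.1 hK u, hs]
  have hb' : ∀ w : EuclideanSpace ℝ (Fin (2 * N)), ‖w‖ = 1 → H (T := T) J w ≤ c :=
    fun w hw => hb w hw
  have hmix4 : ∀ k : Fin N → Fin 4, ‖mix J u k‖ ^ 4 = (N : ℝ) ^ 2 := by
    intro k
    have h := mix_inner_self hJ h1 h2 k
    rw [real_inner_self_eq_norm_sq] at h
    calc ‖mix J u k‖ ^ 4 = (‖mix J u k‖ ^ 2) ^ 2 := by ring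
      _ = (N : ℝ) ^ 2 := by rw [h]
  have hHm : ∀ k : Fin N → Fin 4, H (T := T) J (mix J u k) ≤ c * (N : ℝ) ^ 2 := by
    intro k
    have := H_le_of_unit hb' (mix J u k)
    rwa [hmix4 k] at this
  have hHu : ∀ i, H (T := T) J (u i) ≤ c := fun i => hb' (u i) (hunit i)
  set A : ℝ := ∑ i, (c - H (T := T) J (u i)) with hA
  set A' : ℝ := ∑ k : Fin N → Fin 4, (c * (N : ℝ) ^ 2 - H (T := T) J (mix J u k)) with hA'
  have hA0 : 0 ≤ A := Finset.sum_nonneg fun i _ => by have := hHu i; linarith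
  have hA'0 : 0 ≤ A' := Finset.sum_nonneg fun k _ => by have := hHm k; linarith
  have hAeq : A = (N : ℝ) * c - ∑ i, H (T := T) J (u i) := by
    rw [hA, Finset.sum_sub_distrib, Finset.sum_const, Finset.card_univ, Fintype.card_fin,
      nsmul_eq_mul]
  have hA'eq : A' = 4 ^ N * (c * (N : ℝ) ^ 2) - ∑ k : Fin N → Fin 4, H (T := T) J (mix J u k) := by
    rw [hA', Finset.sum_sub_distrib, Finset.sum_const, Finset.card_univ, Fintype.card_fun,
      Fintype.card_fin, Fintype.card_fin, nsmul_eq_mul]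
    push_cast
    ring
  have hzero : (4 : ℝ) ^ N * A + A' = 0 := by
    rw [hAeq, hA'eq, key]
    linear_combination (4 : ℝ) ^ N * hcs
  have hApos : (0 : ℝ) < 4 ^ N := by positivity
  have hAzero : A = 0 := by nlinarith
  have hsum0 : ∑ i, (c - H (T := T) J (u i)) = 0 := by rw [← hA]; exact hAzero
  have hterm : ∀ i ∈ Finset.univ, c - H (T := T) J (u i) = 0 :=
    (Finset.sum_eq_zero_iff_of_nonneg
      (fun i _ => by have := hHu i; linarith)).mp hsum0
  have hv0 := hterm i₀ (Finset.mem_univ i₀)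
  have hHv : H (T := T) J v = c := by rw [← hi₀]; linarith
  exact hHv
end HSC
end partF

/-- For a Kähler algebraic curvature tensor on `ℝ^{2N}`, if
`H(v) ≤ s/(N(N+1))` for every unit vector `v` (or `≥` for every unit vector),
then `H(v) = s/(N(N+1))` for every unit vector `v`. -/
theorem holSectCurv_pinched_eq_of_kaehler (N : ℕ) (hN : 1 ≤ N)
    (J : EuclideanSpace ℝ (Fin (2 * N)) →ₗ[ℝ] EuclideanSpace ℝ (Fin (2 * N)))
    (hJ : IsOrthCplxStructure J)
    (T : AlgCurvatureTensor (EuclideanSpace ℝ (Fin (2 * N))))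
    (hK : T.IsKaehler J)
    (hpinch :
      (∀ v : EuclideanSpace ℝ (Fin (2 * N)), ‖v‖ = 1 →
        T.R v (J v) v (J v) ≤ scalarCurv T / ((N : ℝ) * ((N : ℝ) + 1))) ∨
      (∀ v : EuclideanSpace ℝ (Fin (2 * N)), ‖v‖ = 1 →
        T.R v (J v) v (J v) ≥ scalarCurv T / ((N : ℝ) * ((N : ℝ) + 1)))) :
    ∀ v : EuclideanSpace ℝ (Fin (2 * N)), ‖v‖ = 1 →
      T.R v (J v) v (J v) = scalarCurv T / ((N : ℝ) * ((N : ℝ) + 1)) := by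
  intro v hv
  rcases hpinch with h | h
  · exact HSC.main_le hN hJ hK h v hv
  · have hK' : (HSC.negT T).IsKaehler J := HSC.negT_isKaehler hK
    have hb' : ∀ w : EuclideanSpace ℝ (Fin (2 * N)), ‖w‖ = 1 →
        (HSC.negT T).R w (J w) w (J w) ≤
          scalarCurv (HSC.negT T) / ((N : ℝ) * ((N : ℝ) + 1)) := by
      intro w hw
      have hge := h w hw
      show -T.R w (J w) w (J w) ≤ _
      rw [scalarCurv_negT, neg_div]
      linarith
    have h2 := HSC.main_le hN hJ hK' hb' v hv
    have h3 : -T.R v (J v) v (J v)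
        = scalarCurv (HSC.negT T) / ((N : ℝ) * ((N : ℝ) + 1)) := h2
    rw [scalarCurv_negT, neg_div] at h3
    linarith
end
end

section
/- Let V = ℝ^{2N} (N ≥ 1) with its Euclidean inner product, J an orthogonal complex structure on V, and R any algebraic curvature tensor on V. If H(v) ≤ (3s* + s)/(4N(N+1)) for every unit vector v ∈ V (or alternatively H(v) ≥ (3s* + s)/(4N(N+1)) for every unit vector v), then H(v) = (3s* + s)/(4N(N+1)) for every unit vector v ∈ V. -/
open MeasureTheory RealInnerProductSpace

noncomputable section

namespace HolAux
open Finset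

variable {E : Type*} [NormedAddCommGroup E] [InnerProductSpace ℝ E]

section Lin
variable (T : AlgCurvatureTensor E)

lemma zero_fst (y z w : E) : T.R 0 y z w = 0 := by
  simpa using T.smul_fst 0 0 y z w

lemma zero_snd (x z w : E) : T.R x 0 z w = 0 := by
  simpa using T.smul_snd 0 x 0 z w

lemma zero_trd (x y w : E) : T.R x y 0 w = 0 := by
  simpa using T.smul_trd 0 x y 0 w

lemma zero_fth (x y z : E) : T.R x y z 0 = 0 := by
  simpa using T.smul_fth 0 x y z 0

lemma sum_fst {ι : Type*} (s : Finset ι) (g : ι → E) (y z w : E) :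
    T.R (∑ i ∈ s, g i) y z w = ∑ i ∈ s, T.R (g i) y z w := by
  classical
  induction s using Finset.cons_induction with
  | empty => simp [zero_fst]
  | cons i s hi ih => simp [Finset.sum_insert hi, T.add_fst, ih]

lemma sum_snd {ι : Type*} (s : Finset ι) (g : ι → E) (x z w : E) :
    T.R x (∑ i ∈ s, g i) z w = ∑ i ∈ s, T.R x (g i) z w := by
  classical
  induction s using Finset.cons_induction with
  | empty => simp [zero_snd]
  | cons i s hi ih => simp [Finset.sum_insert hi, T.add_snd, ih]

lemma sum_trd {ι : Type*} (s : Finset ι) (g : ι → E) (x y w : E) :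
    T.R x y (∑ i ∈ s, g i) w = ∑ i ∈ s, T.R x y (g i) w := by
  classical
  induction s using Finset.cons_induction with
  | empty => simp [zero_trd]
  | cons i s hi ih => simp [Finset.sum_insert hi, T.add_trd, ih]

lemma sum_fth {ι : Type*} (s : Finset ι) (g : ι → E) (x y z : E) :
    T.R x y z (∑ i ∈ s, g i) = ∑ i ∈ s, T.R x y z (g i) := by
  classical
  induction s using Finset.cons_induction with
  | empty => simp [zero_fth]
  | cons i s hi ih => simp [Finset.sum_insert hi, T.add_fth, ih]

lemma expand4 {ι : Type*} [Fintype ι] (a b c d : ι → ℝ) (x y z w : ι → E) :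
    T.R (∑ i, a i • x i) (∑ j, b j • y j) (∑ k, c k • z k) (∑ l, d l • w l)
      = ∑ i, ∑ j, ∑ k, ∑ l, a i * b j * c k * d l * T.R (x i) (y j) (z k) (w l) := by
  rw [sum_fst]
  refine Finset.sum_congr rfl fun i _ => ?_
  rw [T.smul_fst, sum_snd, Finset.mul_sum]
  refine Finset.sum_congr rfl fun j _ => ?_
  rw [T.smul_snd, sum_trd, Finset.mul_sum, Finset.mul_sum]
  refine Finset.sum_congr rfl fun k _ => ?_
  rw [T.smul_trd, sum_fth, Finset.mul_sum, Finset.mul_sum, Finset.mul_sum]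
  refine Finset.sum_congr rfl fun l _ => ?_
  rw [T.smul_fth]
  ring

end Lin

section Trace

/-- Trace of a bilinear map over an orthonormal basis is basis independent. -/
lemma trace_inv {n : ℕ} (F : E → E → ℝ)
    (h1a : ∀ x x' y, F (x + x') y = F x y + F x' y)
    (h1s : ∀ (c : ℝ) x y, F (c • x) y = c * F x y)
    (h2a : ∀ x y y', F x (y + y') = F x y + F x y')
    (h2s : ∀ (c : ℝ) x y, F x (c • y) = c * F x y)
    (f g : OrthonormalBasis (Fin n) ℝ E) :
    ∑ i, F (f i) (f i) = ∑ a, F (g a) (g a) := by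
  have hz1 : ∀ y, F 0 y = 0 := fun y => by simpa using h1s 0 0 y
  have hz2 : ∀ x, F x 0 = 0 := fun x => by simpa using h2s 0 x 0
  have hsum1 : ∀ (s : Finset (Fin n)) (c : Fin n → ℝ) (x : Fin n → E) (y : E),
      F (∑ a ∈ s, c a • x a) y = ∑ a ∈ s, c a * F (x a) y := by
    intro s c x y
    induction s using Finset.cons_induction with
    | empty => simp [hz1]
    | cons i s hi ih => simp [Finset.sum_insert hi, h1a, h1s, ih]
  have hsum2 : ∀ (s : Finset (Fin n)) (c : Fin n → ℝ) (x : E) (y : Fin n → E),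
      F x (∑ a ∈ s, c a • y a) = ∑ a ∈ s, c a * F x (y a) := by
    intro s c x y
    induction s using Finset.cons_induction with
    | empty => simp [hz2]
    | cons i s hi ih => simp [Finset.sum_insert hi, h2a, h2s, ih]
  calc ∑ i, F (f i) (f i)
      = ∑ i, F (∑ a, ⟪g a, f i⟫ • g a) (f i) := by
        refine Finset.sum_congr rfl fun i _ => ?_
        rw [g.sum_repr' (f i)]
    _ = ∑ i, ∑ a, ⟪g a, f i⟫ * F (g a) (f i) := by
        refine Finset.sum_congr rfl fun i _ => ?_
        exact hsum1 univ _ _ _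
    _ = ∑ a, ∑ i, ⟪g a, f i⟫ * F (g a) (f i) := Finset.sum_comm
    _ = ∑ a, F (g a) (g a) := by
        refine Finset.sum_congr rfl fun a _ => ?_
        rw [← hsum2 univ _ _ _]
        congr 1
        have : ∀ i, (⟪g a, f i⟫ : ℝ) • f i = ⟪f i, g a⟫ • f i := by
          intro i; rw [real_inner_comm]
        rw [Finset.sum_congr rfl fun i _ => this i]
        exact f.sum_repr' (g a)

end Trace

section Comb
variable {n : ℕ}

def sgn (b : Bool) : ℝ := if b then 1 else -1

lemma sum_sgn_pow (e : ℕ) : ∑ b : Bool, (sgn b) ^ e = if Even e then 2 else 0 := by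
  rcases Nat.even_or_odd e with he | he
  · simp [Fintype.sum_bool, sgn, he.neg_one_pow, he]
  · simp [Fintype.sum_bool, sgn, he.neg_one_pow, Nat.not_even_iff_odd.2 he]

lemma sgn_prod (σ : Fin n → Bool) (i : Fin n) :
    (∏ m, sgn (σ m) ^ (if i = m then 1 else 0)) = sgn (σ i) := by
  have h : ∀ m, sgn (σ m) ^ (if i = m then 1 else 0) = if i = m then sgn (σ m) else 1 := by
    intro m; split <;> simp
  simp only [h, Finset.prod_ite_eq, mem_univ, if_true]

lemma pattern_iff (i j k l : Fin n) :
    (∀ m : Fin n, Even ((if i = m then 1 else 0) + (if j = m then 1 else 0)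
      + (if k = m then 1 else 0) + (if l = m then 1 else 0)))
    ↔ ((i = j ∧ k = l) ∨ (i = k ∧ j = l) ∨ (i = l ∧ j = k)) := by
  constructor
  · intro h
    have hi := h i; have hj := h j; have hk := h k; have hl := h l
    by_cases hij : i = j <;> by_cases hik : i = k <;> by_cases hil : i = l <;>
      by_cases hjk : j = k <;> by_cases hjl : j = l <;> by_cases hkl : k = l <;>
      simp_all [Nat.even_iff] <;> omega
  · rintro (⟨h1, h2⟩ | ⟨h1, h2⟩ | ⟨h1, h2⟩) m <;> subst h1 <;> subst h2 <;>
      split_ifs <;> simp_all [Nat.even_iff]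

lemma hcube (i j k l : Fin n) :
    ∑ σ : Fin n → Bool, sgn (σ i) * sgn (σ j) * sgn (σ k) * sgn (σ l)
      = if (i = j ∧ k = l) ∨ (i = k ∧ j = l) ∨ (i = l ∧ j = k) then (2 : ℝ) ^ n else 0 := by
  have key : ∀ σ : Fin n → Bool, sgn (σ i) * sgn (σ j) * sgn (σ k) * sgn (σ l)
      = ∏ m, (sgn (σ m)) ^ ((if i = m then 1 else 0) + (if j = m then 1 else 0)
        + (if k = m then 1 else 0) + (if l = m then 1 else 0)) := by
    intro σ
    simp only [pow_add, Finset.prod_mul_distrib, sgn_prod]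
  rw [Finset.sum_congr rfl fun σ _ => key σ]
  rw [show (∑ σ : Fin n → Bool, ∏ m, (sgn (σ m)) ^ ((if i = m then 1 else 0) + (if j = m then 1 else 0)
        + (if k = m then 1 else 0) + (if l = m then 1 else 0)))
      = ∏ m : Fin n, ∑ b : Bool, (sgn b) ^ ((if i = m then 1 else 0) + (if j = m then 1 else 0)
        + (if k = m then 1 else 0) + (if l = m then 1 else 0)) from
    (Fintype.prod_sum fun (m : Fin n) (b : Bool) => (sgn b) ^ ((if i = m then 1 else 0) + (if j = m then 1 else 0)
        + (if k = m then 1 else 0) + (if l = m then 1 else 0))).symm]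
  have h2 : ∀ m : Fin n, (∑ b : Bool, (sgn b) ^ ((if i = m then 1 else 0) + (if j = m then 1 else 0)
        + (if k = m then 1 else 0) + (if l = m then 1 else 0)))
      = if Even ((if i = m then 1 else 0) + (if j = m then 1 else 0)
        + (if k = m then 1 else 0) + (if l = m then 1 else 0)) then (2:ℝ) else 0 :=
    fun m => sum_sgn_pow _
  rw [Finset.prod_congr rfl fun m _ => h2 m]
  by_cases hall : ∀ m : Fin n, Even ((if i = m then 1 else 0) + (if j = m then 1 else 0)
        + (if k = m then 1 else 0) + (if l = m then 1 else 0))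
  · rw [if_pos ((pattern_iff i j k l).mp hall)]
    rw [Finset.prod_congr rfl fun m _ => if_pos (hall m)]
    simp
  · rw [if_neg (fun hp => hall ((pattern_iff i j k l).mpr hp))]
    push_neg at hall
    obtain ⟨m, hm⟩ := hall
    exact Finset.prod_eq_zero (mem_univ m) (if_neg hm)


end Comb

section Cube
variable {n : ℕ} (T : AlgCurvatureTensor E)

lemma ite_split (r : ℝ) (i j k l : Fin n) :
    (if (i = j ∧ k = l) ∨ (i = k ∧ j = l) ∨ (i = l ∧ j = k) then (2:ℝ) ^ n else 0) * r
      = (if i = j ∧ k = l then (2:ℝ) ^ n * r else 0)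
        + (if i = k ∧ j = l then (2:ℝ) ^ n * r else 0)
        + (if i = l ∧ j = k then (2:ℝ) ^ n * r else 0)
        - 2 * (if i = j ∧ i = k ∧ i = l then (2:ℝ) ^ n * r else 0) := by
  by_cases hij : i = j <;> by_cases hik : i = k <;> by_cases hil : i = l <;>
    by_cases hjk : j = k <;> by_cases hjl : j = l <;> by_cases hkl : k = l <;>
    simp_all <;> ring

lemma cube_expand (x y : Fin n → E) :
    ∑ σ : Fin n → Bool, T.R (∑ i, sgn (σ i) • x i) (∑ j, sgn (σ j) • y j)
        (∑ k, sgn (σ k) • x k) (∑ l, sgn (σ l) • y l)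
      = 2 ^ n * ((∑ i, ∑ j, (T.R (x i) (y i) (x j) (y j) + T.R (x i) (y j) (x i) (y j)
          + T.R (x i) (y j) (x j) (y i))) - 2 * ∑ i, T.R (x i) (y i) (x i) (y i)) := by
  rw [Finset.sum_congr rfl fun σ _ =>
    expand4 T (fun i => sgn (σ i)) (fun j => sgn (σ j)) (fun k => sgn (σ k)) (fun l => sgn (σ l)) x y x y]
  rw [Finset.sum_comm]
  refine Eq.trans (Finset.sum_congr rfl fun i _ => Finset.sum_comm) ?_
  refine Eq.trans (Finset.sum_congr rfl fun i _ => Finset.sum_congr rfl fun j _ =>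
    Finset.sum_comm) ?_
  refine Eq.trans (Finset.sum_congr rfl fun i _ => Finset.sum_congr rfl fun j _ =>
    Finset.sum_congr rfl fun k _ => Finset.sum_comm) ?_
  have step : ∀ i j k l : Fin n,
      (∑ σ : Fin n → Bool, sgn (σ i) * sgn (σ j) * sgn (σ k) * sgn (σ l)
          * T.R (x i) (y j) (x k) (y l))
        = (if i = j ∧ k = l then (2:ℝ) ^ n * T.R (x i) (y j) (x k) (y l) else 0)
          + (if i = k ∧ j = l then (2:ℝ) ^ n * T.R (x i) (y j) (x k) (y l) else 0)
          + (if i = l ∧ j = k then (2:ℝ) ^ n * T.R (x i) (y j) (x k) (y l) else 0)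
          - 2 * (if i = j ∧ i = k ∧ i = l then (2:ℝ) ^ n * T.R (x i) (y j) (x k) (y l) else 0) := by
    intro i j k l
    rw [← Finset.sum_mul, hcube, ite_split]
  rw [Finset.sum_congr rfl fun i _ => Finset.sum_congr rfl fun j _ =>
    Finset.sum_congr rfl fun k _ => Finset.sum_congr rfl fun l _ => step i j k l]
  simp only [Finset.sum_add_distrib, Finset.sum_sub_distrib, ite_and, ← Finset.mul_sum,
    Finset.sum_ite_irrel, Finset.sum_const_zero, Finset.sum_ite_eq, Finset.mem_univ, if_true]
  simp only [mul_sub, mul_add, Finset.mul_sum, Finset.sum_add_distrib, Finset.sum_sub_distrib]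
  ring_nf

end Cube

end HolAux

section LambdaSection
open Finset HolAux
variable {n : ℕ}
variable (T : AlgCurvatureTensor (EuclideanSpace ℝ (Fin n)))
variable (J : EuclideanSpace ℝ (Fin n) →ₗ[ℝ] EuclideanSpace ℝ (Fin n))

/-- The fully symmetrized curvature-with-J expression whose double trace is `3s* + s`. -/
def Psi (x y z w : EuclideanSpace ℝ (Fin n)) : ℝ :=
  T.R x (J y) z (J w) + T.R x (J z) y (J w) + T.R x (J z) w (J y)

lemma lambda_inv (f g : OrthonormalBasis (Fin n) ℝ (EuclideanSpace ℝ (Fin n))) :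
    ∑ i, ∑ j, Psi T J (f i) (f i) (f j) (f j)
      = ∑ a, ∑ b, Psi T J (g a) (g a) (g b) (g b) := by
  have step1 : ∀ x, ∑ j, Psi T J x x (f j) (f j) = ∑ b, Psi T J x x (g b) (g b) := by
    intro x
    exact trace_inv (fun z w => Psi T J x x z w)
      (by intro z z' w; simp only [Psi, map_add, T.add_trd, T.add_snd, T.add_fth]; ring)
      (by intro cc z w; simp only [Psi, LinearMap.map_smul, T.smul_trd, T.smul_snd, T.smul_fth]; ring)
      (by intro z w w'; simp only [Psi, map_add, T.add_trd, T.add_snd, T.add_fth]; ring)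
      (by intro cc z w; simp only [Psi, LinearMap.map_smul, T.smul_trd, T.smul_snd, T.smul_fth]; ring)
      f g
  calc ∑ i, ∑ j, Psi T J (f i) (f i) (f j) (f j)
      = ∑ i, ∑ b, Psi T J (f i) (f i) (g b) (g b) :=
        Finset.sum_congr rfl fun i _ => step1 (f i)
    _ = ∑ a, ∑ b, Psi T J (g a) (g a) (g b) (g b) := by
        refine trace_inv (fun x y => ∑ b, Psi T J x y (g b) (g b)) ?_ ?_ ?_ ?_ f g
        · intro x x' y
          rw [← Finset.sum_add_distrib]
          exact Finset.sum_congr rfl fun b _ => by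
            simp only [Psi, map_add, T.add_fst, T.add_snd, T.add_trd, T.add_fth]; ring
        · intro cc x y
          rw [Finset.mul_sum]
          exact Finset.sum_congr rfl fun b _ => by
            simp only [Psi, LinearMap.map_smul, T.smul_fst]; ring
        · intro x y y'
          rw [← Finset.sum_add_distrib]
          exact Finset.sum_congr rfl fun b _ => by
            simp only [Psi, map_add, T.add_fst, T.add_snd, T.add_trd, T.add_fth]; ring
        · intro cc x y
          rw [Finset.mul_sum]
          exact Finset.sum_congr rfl fun b _ => by
            simp only [Psi, LinearMap.map_smul, T.smul_fst, T.smul_snd, T.smul_trd, T.smul_fth]; ring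

lemma lambda_std (hJ : IsOrthCplxStructure J) :
    ∑ a, ∑ b, Psi T J (stdBasis n a) (stdBasis n a) (stdBasis n b) (stdBasis n b)
      = 3 * starScalarCurv T J + scalarCurv T := by
  obtain ⟨hJJ, hJin⟩ := hJ
  set e : Fin n → EuclideanSpace ℝ (Fin n) := stdBasis n with he
  -- standard orthonormal basis
  have hb0 : ∀ a, (EuclideanSpace.basisFun (Fin n) ℝ) a = e a := by
    intro a; simp [he, stdBasis, EuclideanSpace.basisFun_apply]
  set b0 := EuclideanSpace.basisFun (Fin n) ℝ with hb0def
  -- the J-rotated orthonormal basis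
  let Jeq : EuclideanSpace ℝ (Fin n) ≃ₗ[ℝ] EuclideanSpace ℝ (Fin n) :=
    LinearEquiv.ofLinear J (-J)
      (by ext x; simp [hJJ]) (by ext x; simp [hJJ])
  have hJeq : ∀ x, Jeq x = J x := fun x => rfl
  let Jiso : EuclideanSpace ℝ (Fin n) ≃ₗᵢ[ℝ] EuclideanSpace ℝ (Fin n) :=
    Jeq.isometryOfInner (fun x y => hJin x y)
  have hJiso : ∀ x, Jiso x = J x := fun x => rfl
  set bJ := b0.map Jiso with hbJdef
  have hbJ : ∀ a, bJ a = J (e a) := by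
    intro a; rw [hbJdef, OrthonormalBasis.map_apply, hJiso, hb0]
  -- negation in the fourth slot
  have neg4 : ∀ x y z w, T.R x y z (-w) = - T.R x y z w := by
    intro x y z w
    have h := T.smul_fth (-1) x y z w
    simpa using h
  -- P3 : the third piece equals s*
  have P3 : ∑ a, ∑ b, T.R (e a) (J (e b)) (e b) (J (e a)) = starScalarCurv T J := by
    rw [starScalarCurv, Finset.sum_comm]
  -- P2 : the second piece equals s
  have P2 : ∑ a, ∑ b, T.R (e a) (J (e b)) (e a) (J (e b)) = scalarCurv T := by
    rw [scalarCurv]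
    refine Finset.sum_congr rfl fun a _ => ?_
    have := trace_inv (fun y w => T.R (e a) y (e a) w)
      (fun y y' w => T.add_snd _ _ _ _ _) (fun cc y w => T.smul_snd _ _ _ _ _)
      (fun y w w' => T.add_fth _ _ _ _ _) (fun cc y w => T.smul_fth _ _ _ _ _)
      bJ b0
    simp only [hbJ, hb0] at this
    exact this
  -- PX : the mixed contraction equals s*
  have PX : ∑ a, ∑ b, T.R (e a) (e b) (J (e a)) (J (e b)) = starScalarCurv T J := by
    rw [← P3]
    refine Finset.sum_congr rfl fun a _ => ?_
    have := trace_inv (fun y w => T.R (e a) y (J (e a)) (J w))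
      (fun y y' w => T.add_snd _ _ _ _ _) (fun cc y w => T.smul_snd _ _ _ _ _)
      (fun y w w' => by simp only [map_add, T.add_fth]) (fun cc y w => by simp only [LinearMap.map_smul, T.smul_fth])
      b0 bJ
    simp only [hbJ, hb0] at this
    rw [this]
    refine Finset.sum_congr rfl fun b _ => ?_
    rw [hJJ, neg4, T.antisymm₃₄]
    ring
  -- S2' : second Bianchi piece equals s*
  have S2' : ∑ a, ∑ b, T.R (e b) (J (e a)) (e a) (J (e b)) = starScalarCurv T J := by
    rw [starScalarCurv]
  -- PA : first piece equals 2 s*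
  have PA : ∑ a, ∑ b, T.R (e a) (J (e a)) (e b) (J (e b)) = 2 * starScalarCurv T J := by
    have hsum0 : ∑ a, ∑ b, (T.R (e a) (e b) (J (e a)) (J (e b))
        + T.R (e b) (J (e a)) (e a) (J (e b)) + T.R (J (e a)) (e a) (e b) (J (e b))) = 0 := by
      have : ∀ a b : Fin n, T.R (e a) (e b) (J (e a)) (J (e b))
          + T.R (e b) (J (e a)) (e a) (J (e b)) + T.R (J (e a)) (e a) (e b) (J (e b)) = 0 :=
        fun a b => T.bianchi (e a) (e b) (J (e a)) (J (e b))
      simp [this]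
    have h3 : ∑ a, ∑ b, T.R (J (e a)) (e a) (e b) (J (e b))
        = - ∑ a, ∑ b, T.R (e a) (J (e a)) (e b) (J (e b)) := by
      have := Finset.sum_congr rfl fun (a : Fin n) (_ : a ∈ Finset.univ) =>
        Finset.sum_congr rfl fun (b : Fin n) (_ : b ∈ Finset.univ) =>
          T.antisymm₁₂ (J (e a)) (e a) (e b) (J (e b))
      rw [this]
      simp
    have hsplit2 : ∑ a, ∑ b, (T.R (e a) (e b) (J (e a)) (J (e b))
        + T.R (e b) (J (e a)) (e a) (J (e b)) + T.R (J (e a)) (e a) (e b) (J (e b)))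
        = (∑ a, ∑ b, T.R (e a) (e b) (J (e a)) (J (e b)))
          + (∑ a, ∑ b, T.R (e b) (J (e a)) (e a) (J (e b)))
          + (∑ a, ∑ b, T.R (J (e a)) (e a) (e b) (J (e b))) := by
      simp only [Finset.sum_add_distrib]
    rw [hsplit2, PX, S2', h3] at hsum0
    linarith
  -- assemble
  have hsplit : ∑ a, ∑ b, Psi T J (e a) (e a) (e b) (e b)
      = (∑ a, ∑ b, T.R (e a) (J (e a)) (e b) (J (e b)))
        + (∑ a, ∑ b, T.R (e a) (J (e b)) (e a) (J (e b)))
        + (∑ a, ∑ b, T.R (e a) (J (e b)) (e b) (J (e a))) := by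
    simp only [Psi, ← Finset.sum_add_distrib]
  rw [hsplit, PA, P2, P3]
  ring

/-- positivity bookkeeping -/
lemma conclude {ι κ : Type*} [Fintype ι] [Fintype κ] (a : ι → ℝ) (b : κ → ℝ)
    (h0 : (∑ i, a i) + (∑ k, b k) = 0) (ha : ∀ i, 0 ≤ a i) (hb : ∀ k, 0 ≤ b k) (i₀ : ι) :
    a i₀ = 0 := by
  have hA : 0 ≤ ∑ i, a i := Finset.sum_nonneg fun i _ => ha i
  have hB : 0 ≤ ∑ k, b k := Finset.sum_nonneg fun k _ => hb k
  have hA0 : ∑ i, a i = 0 := by linarith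
  exact (Finset.sum_eq_zero_iff_of_nonneg (fun i _ => ha i)).mp hA0 i₀ (Finset.mem_univ _)

end LambdaSection


/-- For any algebraic curvature tensor on `ℝ^{2N}` with orthogonal complex
structure `J`, if `H(v) ≤ (3s* + s)/(4N(N+1))` for every unit vector `v` (or `≥` for
every unit vector), then `H(v) = (3s* + s)/(4N(N+1))` for every unit vector `v`. -/
theorem holSectCurv_pinched_eq_almostHermitian (N : ℕ) (hN : 1 ≤ N)
    (J : EuclideanSpace ℝ (Fin (2 * N)) →ₗ[ℝ] EuclideanSpace ℝ (Fin (2 * N)))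
    (hJ : IsOrthCplxStructure J)
    (T : AlgCurvatureTensor (EuclideanSpace ℝ (Fin (2 * N))))
    (hpinch :
      (∀ v : EuclideanSpace ℝ (Fin (2 * N)), ‖v‖ = 1 →
        T.R v (J v) v (J v)
          ≤ (3 * starScalarCurv T J + scalarCurv T) / (4 * (N : ℝ) * ((N : ℝ) + 1))) ∨
      (∀ v : EuclideanSpace ℝ (Fin (2 * N)), ‖v‖ = 1 →
        T.R v (J v) v (J v)
          ≥ (3 * starScalarCurv T J + scalarCurv T) / (4 * (N : ℝ) * ((N : ℝ) + 1)))) :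
    ∀ v : EuclideanSpace ℝ (Fin (2 * N)), ‖v‖ = 1 →
      T.R v (J v) v (J v)
        = (3 * starScalarCurv T J + scalarCurv T) / (4 * (N : ℝ) * ((N : ℝ) + 1)) := by
  classical
  intro v hv
  haveI : NeZero (2 * N) := ⟨by omega⟩
  set ss := starScalarCurv T J with hssdef
  set sc := scalarCurv T with hscdef
  obtain ⟨c, hcdef⟩ : ∃ c : ℝ, c = (3 * ss + sc) / (4 * (N : ℝ) * ((N : ℝ) + 1)) := ⟨_, rfl⟩
  rw [← hcdef] at hpinch ⊢
  have hNpos : (0:ℝ) < (N:ℝ) := by exact_mod_cast hN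
  have hden : (4 * (N : ℝ) * ((N : ℝ) + 1)) ≠ 0 := by positivity
  have hc : c * (4 * (N : ℝ) * ((N : ℝ) + 1)) = 3 * ss + sc := by
    rw [hcdef]; field_simp
  -- extend v to an orthonormal basis
  have hcard : Module.finrank ℝ (EuclideanSpace ℝ (Fin (2 * N))) = Fintype.card (Fin (2 * N)) := by
    simp [finrank_euclideanSpace_fin]
  have horth : Orthonormal ℝ (({(0 : Fin (2*N))} : Set (Fin (2*N))).restrict (fun _ => v)) := by
    constructor
    · intro i; exact hv
    · intro i j hij
      exact absurd (Subtype.ext (i.2.trans j.2.symm)) hij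
  obtain ⟨f, hf⟩ := horth.exists_orthonormalBasis_extension_of_card_eq hcard
  have hf0 : f 0 = v := hf 0 rfl
  -- the holomorphic sectional curvature function
  set Hf : EuclideanSpace ℝ (Fin (2 * N)) → ℝ := fun u => T.R u (J u) u (J u) with hHf
  -- the hypercube vectors
  set u : (Fin (2*N) → Bool) → EuclideanSpace ℝ (Fin (2 * N)) := fun σ => ∑ i, HolAux.sgn (σ i) • f i with hu
  set sq : ℝ := Real.sqrt (2*N) with hsq
  have hsqpos : 0 < sq := Real.sqrt_pos.mpr (by positivity)
  have hss' : sq * sq = (2*N : ℝ) := Real.mul_self_sqrt (by positivity)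
  set w : (Fin (2*N) → Bool) → EuclideanSpace ℝ (Fin (2 * N)) := fun σ => sq⁻¹ • u σ with hw
  -- norms
  have hwnorm : ∀ σ, ‖w σ‖ = 1 := by
    intro σ
    have hin : (inner ℝ (u σ) (u σ) : ℝ) = (2*N : ℝ) := by
      rw [hu]
      rw [f.orthonormal.inner_sum (fun i => HolAux.sgn (σ i)) (fun i => HolAux.sgn (σ i)) Finset.univ]
      have : ∀ i : Fin (2*N),
          (starRingEnd ℝ) (HolAux.sgn (σ i)) * HolAux.sgn (σ i) = 1 := by
        intro i; cases h : σ i <;> simp [HolAux.sgn]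
      rw [Finset.sum_congr rfl fun i _ => this i]
      simp
    have hnu : ‖u σ‖ = sq := by
      have h2 : ‖u σ‖ ^ 2 = (2*N : ℝ) := by rw [← real_inner_self_eq_norm_sq]; exact hin
      rw [hsq, ← h2, Real.sqrt_sq (norm_nonneg _)]
    rw [hw]
    simp only [norm_smul, Real.norm_eq_abs, hnu, abs_of_nonneg (inv_nonneg.mpr hsqpos.le)]
    field_simp
  have hfnorm : ∀ i, ‖f i‖ = 1 := fun i => f.orthonormal.1 i
  -- scaling of H
  have hHw : ∀ σ, Hf (u σ) = ((2*N:ℝ)^2) * Hf (w σ) := by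
    intro σ
    have husw : u σ = sq • w σ := by
      rw [hw, smul_smul, mul_inv_cancel₀ hsqpos.ne', one_smul]
    simp only [hHf]
    rw [husw]
    rw [show J (sq • w σ) = sq • J (w σ) from J.map_smul sq (w σ)]
    rw [T.smul_fst, T.smul_snd, T.smul_trd, T.smul_fth]
    rw [show ((2*N:ℝ))^2 = (sq*sq)*(sq*sq) by rw [hss']; ring]
    ring
  -- the cubature identity
  have hJu : ∀ σ, J (u σ) = ∑ j, HolAux.sgn (σ j) • (J (f j)) := by
    intro σ; rw [hu, map_sum]
    exact Finset.sum_congr rfl fun j _ => J.map_smul _ _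
  have hcubeH : ∑ σ : Fin (2*N) → Bool, Hf (u σ)
      = 2 ^ (2*N) * ((∑ i, ∑ j, Psi T J (f i) (f i) (f j) (f j)) - 2 * ∑ i, Hf (f i)) := by
    have : ∀ σ : Fin (2*N) → Bool, Hf (u σ)
        = T.R (∑ i, HolAux.sgn (σ i) • f i) (∑ j, HolAux.sgn (σ j) • (J (f j)))
            (∑ k, HolAux.sgn (σ k) • f k) (∑ l, HolAux.sgn (σ l) • (J (f l))) := by
      intro σ; simp only [hHf]; rw [hu, hJu σ]
    rw [Finset.sum_congr rfl fun σ _ => this σ]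
    rw [HolAux.cube_expand T f (fun j => J (f j))]
    rfl
  have hLam : (∑ i, ∑ j, Psi T J (f i) (f i) (f j) (f j)) = 3 * ss + sc := by
    rw [lambda_inv T J f (EuclideanSpace.basisFun (Fin (2*N)) ℝ)]
    have hb0 : ∀ a, (EuclideanSpace.basisFun (Fin (2*N)) ℝ) a = stdBasis (2*N) a := by
      intro a; simp [stdBasis, EuclideanSpace.basisFun_apply]
    rw [Finset.sum_congr rfl fun a _ => Finset.sum_congr rfl fun b _ => by rw [hb0 a, hb0 b]]
    exact lambda_std T J hJ
  -- the balance identity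
  set q : ℝ := ((2*N:ℝ)^2) / 2 ^ (2*N) with hq
  have h2npos : (0:ℝ) < 2 ^ (2*N) := by positivity
  have hqpos : 0 < q := by rw [hq]; positivity
  have hbal : (∑ i, 2 * (c - Hf (f i)))
      + (∑ σ : Fin (2*N) → Bool, q * (c - Hf (w σ))) = 0 := by
    have e1 : ∑ i, 2 * (c - Hf (f i)) = 2 * (2*N:ℝ) * c - 2 * ∑ i, Hf (f i) := by
      have h' : ∀ i : Fin (2*N), 2 * (c - Hf (f i)) = 2*c - 2*Hf (f i) := fun i => by ring
      rw [Finset.sum_congr rfl fun i _ => h' i, Finset.sum_sub_distrib, Finset.sum_const,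
        Finset.card_univ, ← Finset.mul_sum, nsmul_eq_mul, Fintype.card_fin]
      push_cast
      ring
    have e2 : ∑ σ : Fin (2*N) → Bool, q * (c - Hf (w σ))
        = 2 ^ (2*N) * (q * c) - q * ∑ σ : Fin (2*N) → Bool, Hf (w σ) := by
      have h' : ∀ σ : Fin (2*N) → Bool, q * (c - Hf (w σ)) = q*c - q*Hf (w σ) :=
        fun σ => by ring
      rw [Finset.sum_congr rfl fun σ _ => h' σ, Finset.sum_sub_distrib, Finset.sum_const,
        Finset.card_univ, ← Finset.mul_sum, nsmul_eq_mul]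
      simp only [Fintype.card_fun, Fintype.card_bool, Fintype.card_fin]
      push_cast
      ring
    have e3 : ∑ σ : Fin (2*N) → Bool, Hf (w σ)
        = ((2*N:ℝ)^2)⁻¹ * (2 ^ (2*N) * ((3*ss+sc) - 2 * ∑ i, Hf (f i))) := by
      have : ∀ σ : Fin (2*N) → Bool, Hf (w σ) = ((2*N:ℝ)^2)⁻¹ * Hf (u σ) := by
        intro σ
        rw [hHw σ]
        field_simp
      rw [Finset.sum_congr rfl fun σ _ => this σ, ← Finset.mul_sum, hcubeH, hLam]
    have e3' : ∑ σ : Fin (2*N) → Bool, Hf (w σ)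
        = ((2*N:ℝ)^2)⁻¹ * (2 ^ (2*N) * ((c * (4 * (N : ℝ) * ((N : ℝ) + 1))) - 2 * ∑ i, Hf (f i))) := by
      rw [hc]; exact e3
    rw [e1, e2, e3', hq]
    have h2n0 : ((2:ℝ)^(2*N)) ≠ 0 := ne_of_gt h2npos
    have hN20 : ((2*N:ℝ))^2 ≠ 0 := by positivity
    field_simp
    ring
  -- conclude
  have hkey : 2 * (c - Hf v) = 0 ∨ 2 * (Hf v - c) = 0 := by
    rcases hpinch with hle | hge
    · left
      have := conclude (fun i => 2 * (c - Hf (f i)))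
        (fun σ => q * (c - Hf (w σ))) hbal
        (fun i => by
          have := hle (f i) (hfnorm i)
          simp only [hHf]
          linarith)
        (fun σ => by
          have := hle (w σ) (hwnorm σ)
          simp only [hHf]
          exact mul_nonneg hqpos.le (by linarith))
        0
      rw [hf0] at this
      exact this
    · right
      have hbal' : (∑ i, 2 * (Hf (f i) - c))
          + (∑ σ : Fin (2*N) → Bool, q * (Hf (w σ) - c)) = 0 := by
        have h1 : ∀ i : Fin (2*N), 2 * (Hf (f i) - c) = -(2 * (c - Hf (f i))) := fun i => by ring
        have h2 : ∀ σ : Fin (2*N) → Bool, q * (Hf (w σ) - c) = -(q * (c - Hf (w σ))) :=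
          fun σ => by ring
        rw [Finset.sum_congr rfl fun i _ => h1 i, Finset.sum_congr rfl fun σ _ => h2 σ]
        simp only [Finset.sum_neg_distrib]
        linarith [hbal]
      have := conclude (fun i => 2 * (Hf (f i) - c))
        (fun σ => q * (Hf (w σ) - c)) hbal'
        (fun i => by
          have := hge (f i) (hfnorm i)
          simp only [hHf]
          linarith)
        (fun σ => by
          have := hge (w σ) (hwnorm σ)
          simp only [hHf]
          exact mul_nonneg hqpos.le (by linarith))
        0
      rw [hf0] at this
      exact this
  have hfin : Hf v = c := by rcases hkey with h | h <;> linarith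
  simpa [hHf] using hfin
end
end

section
/- Let V = ℝⁿ with n = 2N even (N ≥ 1), J an orthogonal complex structure on V, and R an algebraic curvature tensor on V with the Kähler symmetry with respect to J which is Einstein with constant Λ. Define F : V → ℝ by F(v) = R(v, J(v), v, J(v)). Then the Euclidean Laplacian of F satisfies ΔF(v) = 16 Λ ‖v‖² for all v ∈ V. -/
open MeasureTheory RealInnerProductSpace

noncomputable section

section Aux

variable {n : ℕ} (T : AlgCurvatureTensor (EuclideanSpace ℝ (Fin n)))
  (J : EuclideanSpace ℝ (Fin n) →ₗ[ℝ] EuclideanSpace ℝ (Fin n))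

def Qml : MultilinearMap ℝ (fun _ : Fin 4 => EuclideanSpace ℝ (Fin n)) ℝ where
  toFun p := T.R (p 0) (J (p 1)) (p 2) (J (p 3))
  map_update_add' := by
    intro dec m i x y
    rw [Subsingleton.elim dec (instDecidableEqFin 4)]; clear dec
    fin_cases i <;>
      simp [Function.update_apply, T.add_fst, T.add_snd, T.add_trd, T.add_fth]
  map_update_smul' := by
    intro dec m i c x
    rw [Subsingleton.elim dec (instDecidableEqFin 4)]; clear dec
    fin_cases i <;>
      simp [Function.update_apply, T.smul_fst, T.smul_snd, T.smul_trd, T.smul_fth, smul_eq_mul]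

lemma euclid_expand (x : EuclideanSpace ℝ (Fin n)) : x = ∑ j, x j • stdBasis n j := by
  ext k
  rw [WithLp.ofLp_sum, Finset.sum_apply]
  simp [stdBasis, EuclideanSpace.single_apply]

lemma Qml_cont : Continuous (Qml T J) := by
  have key : ⇑(Qml T J) = fun p => ∑ r : Fin 4 → Fin n,
      (∏ i, p i (r i)) • (Qml T J) (fun i => stdBasis n (r i)) := by
    funext p
    conv_lhs => rw [show p = (fun i => ∑ j, p i j • stdBasis n j) from
      funext fun i => euclid_expand (p i)]
    rw [MultilinearMap.map_sum]
    exact Finset.sum_congr rfl fun r _ => by rw [← MultilinearMap.map_smul_univ]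
  rw [key]
  refine continuous_finset_sum _ fun r _ => ?_
  exact ((continuous_finset_prod _ fun i _ =>
    ((EuclideanSpace.proj (r i)).continuous.comp (continuous_apply i)))).smul continuous_const

def Qcm : ContinuousMultilinearMap ℝ (fun _ : Fin 4 => EuclideanSpace ℝ (Fin n)) ℝ :=
  { Qml T J with cont := Qml_cont T J }

lemma Qcm_apply (p : Fin 4 → EuclideanSpace ℝ (Fin n)) :
    Qcm T J p = T.R (p 0) (J (p 1)) (p 2) (J (p 3)) := rfl

lemma hd1 (y v : EuclideanSpace ℝ (Fin n)) :
    fderiv ℝ (fun u => T.R u (J u) u (J u)) y v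
      = ∑ i : Fin 4, Qcm T J (Function.update (fun _ => y) i v) := by
  have h : HasFDerivAt (fun x => (Qcm T J) (fun i : Fin 4 => _root_.id x))
      (∑ i : Fin 4, ((Qcm T J).toContinuousLinearMap (fun j : Fin 4 => _root_.id y) i) ∘L
        (ContinuousLinearMap.id ℝ _)) y :=
    HasFDerivAt.multilinear_comp (Qcm T J) (fun _ => hasFDerivAt_id y)
  have h2 : fderiv ℝ (fun u => T.R u (J u) u (J u)) y
      = ∑ i : Fin 4, ((Qcm T J).toContinuousLinearMap (fun j : Fin 4 => _root_.id y) i) ∘L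
        (ContinuousLinearMap.id ℝ _) := h.fderiv
  rw [h2]
  simp [ContinuousMultilinearMap.toContinuousLinearMap_apply]

lemma hstep2 (i : Fin 4) (e x : EuclideanSpace ℝ (Fin n)) :
    HasFDerivAt (fun y => Qcm T J (Function.update (fun _ => y) i e))
      (∑ j : Fin 4, ((Qcm T J).toContinuousLinearMap
          (fun k : Fin 4 => (if k = i then (fun _ : EuclideanSpace ℝ (Fin n) => e) else _root_.id) x) j) ∘L
        (if j = i then (0 : _ →L[ℝ] _) else ContinuousLinearMap.id ℝ _)) x := by
  have hfun : (fun y => Qcm T J (Function.update (fun _ => y) i e))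
      = fun y => Qcm T J (fun j =>
          (if j = i then (fun _ : EuclideanSpace ℝ (Fin n) => e) else _root_.id) y) := by
    funext y
    congr 1
    funext j
    by_cases hji : j = i <;> simp [Function.update_apply, hji]
  rw [hfun]
  exact HasFDerivAt.multilinear_comp (Qcm T J)
      (g := fun j => (if j = i then (fun _ : EuclideanSpace ℝ (Fin n) => e) else _root_.id))
      (g' := fun j => if j = i then (0 : _ →L[ℝ] _) else ContinuousLinearMap.id ℝ _)
      (x := x)
      (fun j => by
        by_cases hji : j = i
        · simp only [hji, if_pos rfl, ite_true]; exact hasFDerivAt_const e x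
        · simp only [if_neg hji]; exact hasFDerivAt_id x)

lemma hd2 (x e : EuclideanSpace ℝ (Fin n)) :
    fderiv ℝ (fun y => fderiv ℝ (fun u => T.R u (J u) u (J u)) y e) x e
      = ∑ i : Fin 4, ∑ j : Fin 4, if j = i then 0
          else Qcm T J (Function.update (Function.update (fun _ => x) i e) j e) := by
  have hfun : (fun y => fderiv ℝ (fun u => T.R u (J u) u (J u)) y e)
      = fun y => ∑ i : Fin 4, Qcm T J (Function.update (fun _ => y) i e) :=
    funext fun y => hd1 T J y e
  rw [hfun]
  have hsum := HasFDerivAt.fun_sum (u := (Finset.univ : Finset (Fin 4)))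
    (fun i _ => hstep2 T J i e x)
  rw [hsum.fderiv]
  rw [ContinuousLinearMap.sum_apply]
  refine Finset.sum_congr rfl fun i _ => ?_
  rw [ContinuousLinearMap.sum_apply]
  refine Finset.sum_congr rfl fun j _ => ?_
  by_cases hji : j = i
  · simp [hji]
  · simp only [if_neg hji, ContinuousLinearMap.comp_apply, ContinuousLinearMap.id_apply,
      ContinuousMultilinearMap.toContinuousLinearMap_apply]
    congr 1
    funext k
    by_cases hki : k = i <;> simp [Function.update_apply, hki, hji]

lemma expand12 (x e : EuclideanSpace ℝ (Fin n)) :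
    (∑ i : Fin 4, ∑ j : Fin 4, if j = i then (0:ℝ)
        else Qcm T J (Function.update (Function.update (fun _ => x) i e) j e))
      = 2 * T.R e (J e) x (J x) + 2 * T.R e (J x) e (J x) + 2 * T.R e (J x) x (J e)
        + 2 * T.R x (J e) e (J x) + 2 * T.R x (J e) x (J e) + 2 * T.R x (J x) e (J e) := by
  simp (config := { decide := true }) only [Fin.sum_univ_four, Qcm_apply,
    Function.update_apply, if_true, if_false, ite_true, ite_false]
  ring

section Alg
variable (hJsq : ∀ x, J (J x) = -x)
  (hJinner : ∀ x y, (inner ℝ (J x) (J y) : ℝ) = inner ℝ x y)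
  (hK : ∀ x y z w, T.R (J x) (J y) z w = T.R x y z w)
  (Λ : ℝ)
  (hE : ∀ x y, (∑ a : Fin n, T.R x (stdBasis n a) y (stdBasis n a)) = Λ * (inner ℝ x y : ℝ))

lemma Rneg₁ (a b z w : EuclideanSpace ℝ (Fin n)) : T.R (-a) b z w = -T.R a b z w := by
  have := T.smul_fst (-1) a b z w
  rwa [neg_one_smul, neg_one_mul] at this

lemma Rneg₂ (a b z w : EuclideanSpace ℝ (Fin n)) : T.R a (-b) z w = -T.R a b z w := by
  have := T.smul_snd (-1) a b z w
  rwa [neg_one_smul, neg_one_mul] at this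

include hE in
lemma L2 (x : EuclideanSpace ℝ (Fin n)) :
    ∑ a : Fin n, T.R (stdBasis n a) x (stdBasis n a) x = Λ * (inner ℝ x x : ℝ) := by
  have : ∀ a, T.R (stdBasis n a) x (stdBasis n a) x = T.R x (stdBasis n a) x (stdBasis n a) := by
    intro a
    rw [T.antisymm₁₂, T.antisymm₃₄, neg_neg]
  rw [Finset.sum_congr rfl fun a _ => this a, hE]

include hJsq hK in
lemma term5 (x e : EuclideanSpace ℝ (Fin n)) :
    T.R x (J e) x (J e) = T.R (J x) e (J x) e := by
  have h1 : ∀ z w, T.R x (J e) z w = - T.R (J x) e z w := by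
    intro z w
    rw [← hK x (J e), hJsq, Rneg₂]
  rw [h1, T.pair_symm, h1, neg_neg, T.pair_symm]

include hJsq hJinner hK hE in
lemma L5 (x : EuclideanSpace ℝ (Fin n)) :
    ∑ a : Fin n, T.R x (J (stdBasis n a)) x (J (stdBasis n a)) = Λ * (inner ℝ x x : ℝ) := by
  rw [Finset.sum_congr rfl fun a _ => term5 T J hJsq hK x (stdBasis n a)]
  rw [hE, hJinner]

include hJinner hE in
lemma L2' (x : EuclideanSpace ℝ (Fin n)) :
    ∑ a : Fin n, T.R (stdBasis n a) (J x) (stdBasis n a) (J x) = Λ * (inner ℝ x x : ℝ) := by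
  rw [L2 T Λ hE (J x), hJinner]

include hJsq hJinner hK hE in
lemma L1 (x : EuclideanSpace ℝ (Fin n)) :
    ∑ a : Fin n, T.R (stdBasis n a) (J (stdBasis n a)) x (J x)
      = 2 * (Λ * (inner ℝ x x : ℝ)) := by
  have key : ∀ a, T.R (stdBasis n a) (J (stdBasis n a)) x (J x)
      = T.R (stdBasis n a) (J x) (stdBasis n a) (J x) + T.R x (stdBasis n a) x (stdBasis n a) := by
    intro a
    set e := stdBasis n a
    have hb := T.bianchi e (J e) x (J x)
    have h1 : T.R (J e) x e (J x) = - T.R e (J x) e (J x) := by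
      rw [← hK (J e) x, hJsq, Rneg₁]
    have h2 : T.R x e (J e) (J x) = - T.R x e x e := by
      rw [T.pair_symm, hK, T.antisymm₃₄]
      have : T.R e x e x = T.R x e x e := by rw [T.antisymm₁₂, T.antisymm₃₄, neg_neg]
      rw [this]
    -- hb : R e (Je) x (Jx) + R (Je) x e (Jx) + R x e (Je) (Jx) = 0
    have := hb
    rw [h1, h2] at this
    linarith
  rw [Finset.sum_congr rfl fun a _ => key a, Finset.sum_add_distrib, L2' T J hJinner Λ hE, hE]
  ring

include hJsq hJinner hK hE in
lemma L3 (x : EuclideanSpace ℝ (Fin n)) :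
    ∑ a : Fin n, T.R (stdBasis n a) (J x) x (J (stdBasis n a))
      = Λ * (inner ℝ x x : ℝ) := by
  have key : ∀ a, T.R (stdBasis n a) (J x) x (J (stdBasis n a))
      = T.R (stdBasis n a) (J (stdBasis n a)) x (J x) - T.R x (stdBasis n a) x (stdBasis n a) := by
    intro a
    set e := stdBasis n a
    have hb := T.bianchi e (J x) x (J e)
    have h1 : T.R x e (J x) (J e) = T.R x e x e := by
      rw [T.pair_symm x e, hK]
    have h2 : T.R (J x) x e (J e) = - T.R e (J e) x (J x) := by
      have hx : x = -(J (J x)) := by rw [hJsq, neg_neg]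
      calc T.R (J x) x e (J e) = T.R (J x) (-(J (J x))) e (J e) := by rw [← hx]
        _ = - T.R (J x) (J (J x)) e (J e) := by rw [Rneg₂]
        _ = - T.R x (J x) e (J e) := by rw [hK]
        _ = - T.R e (J e) x (J x) := by rw [T.pair_symm x (J x)]
    rw [h1, h2] at hb
    linarith
  rw [Finset.sum_congr rfl fun a _ => key a, Finset.sum_sub_distrib,
    L1 T J hJsq hJinner hK Λ hE, hE]
  ring

end Alg

end Aux

/-- For a Kähler–Einstein algebraic curvature tensor with Einstein constant
`Λ` on `ℝ^{2N}`, the Euclidean Laplacian of `F(v) = R(v, Jv, v, Jv)` is `16 Λ ‖v‖²`. -/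
theorem eucLaplacian_holSectCurv_einstein (N : ℕ) (hN : 1 ≤ N)
    (J : EuclideanSpace ℝ (Fin (2 * N)) →ₗ[ℝ] EuclideanSpace ℝ (Fin (2 * N)))
    (hJ : IsOrthCplxStructure J)
    (T : AlgCurvatureTensor (EuclideanSpace ℝ (Fin (2 * N))))
    (hK : T.IsKaehler J) (Λ : ℝ) (hE : T.IsEinstein Λ) :
    ∀ v : EuclideanSpace ℝ (Fin (2 * N)),
      eucLaplacian (fun u => T.R u (J u) u (J u)) v = 16 * Λ * ‖v‖ ^ 2 := by
  intro v
  obtain ⟨hJsq, hJinner⟩ := hJ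
  have hK' : ∀ x y z w, T.R (J x) (J y) z w = T.R x y z w := hK
  have hE' : ∀ x y, (∑ a : Fin (2*N), T.R x (stdBasis (2*N) a) y (stdBasis (2*N) a))
      = Λ * (inner ℝ x y : ℝ) := hE
  unfold eucLaplacian
  rw [Finset.sum_congr rfl fun a _ => by
    rw [hd2 T J v (stdBasis (2*N) a), expand12 T J v (stdBasis (2*N) a)]]
  simp only [Finset.sum_add_distrib, ← Finset.mul_sum]
  rw [L1 T J hJsq hJinner hK' Λ hE' v, L2' T J hJinner Λ hE' v, L3 T J hJsq hJinner hK' Λ hE' v,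
    L5 T J hJsq hJinner hK' Λ hE' v]
  rw [Finset.sum_congr rfl fun a _ => T.pair_symm v (J (stdBasis (2*N) a)) (stdBasis (2*N) a) (J v),
    L3 T J hJsq hJinner hK' Λ hE' v]
  rw [Finset.sum_congr rfl fun a _ => T.pair_symm v (J v) (stdBasis (2*N) a) (J (stdBasis (2*N) a)),
    L1 T J hJsq hJinner hK' Λ hE' v]
  rw [real_inner_self_eq_norm_sq]
  ring
end
end
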